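/- (Dziobek's characterization) Let m₁, m₂, m₃, m₄ > 0 and let q = (q₁, q₂, q₃, q₄) be four pairwise distinct points in ℝ² that do not lie on a common line, with Σ m_i q_i = 0, and whose mutual-distance vector r(q) = (‖q₁−q₂‖, ‖q₁−q₃‖, ‖q₁−q₄‖, ‖q₂−q₃‖, ‖q₂−q₄‖, ‖q₃−q₄‖) satisfies I(r(q)) = 1. Then q is a central configuration (i.e. there is λ ∈ ℝ with λ m_i q_i = Σ_{j≠i} m_i m_j (q_j − q_i)/‖q_j − q_i‖³ for all i) if and only if there exist real numbers λ', η such that ∇U(r(q)) = λ' M ∇I(r(q)) + η ∇H(r(q)), i.e. r(q) is a critical point of U restricted to 𝒩 = {r ∈ 𝒢 : I(r) = 1, H(r) = 0}. -/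

import Mathlib

open Finset

/-- The Cayley–Menger determinant as a function of
`r = (r₁₂, r₁₃, r₁₄, r₂₃, r₂₄, r₃₄) ∈ ℝ⁶`. -/
noncomputable def Hvec (r : Fin 6 → ℝ) : ℝ :=
  Matrix.det !![(0:ℝ), 1, 1, 1, 1;
                1, 0, (r 0)^2, (r 1)^2, (r 2)^2;
                1, (r 0)^2, 0, (r 3)^2, (r 4)^2;
                1, (r 1)^2, (r 3)^2, 0, (r 5)^2;
                1, (r 2)^2, (r 4)^2, (r 5)^2, 0]

/-- The Newtonian potential `U` as a function of `r ∈ ℝ⁶`. -/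
noncomputable def Uvec (m1 m2 m3 m4 : ℝ) (r : Fin 6 → ℝ) : ℝ :=
  m1*m2/(r 0) + m1*m3/(r 1) + m1*m4/(r 2) +
  m2*m3/(r 3) + m2*m4/(r 4) + m3*m4/(r 5)

/-- The moment of inertia `I` as a function of `r ∈ ℝ⁶`. -/
noncomputable def Ivec (m1 m2 m3 m4 : ℝ) (r : Fin 6 → ℝ) : ℝ :=
  (1/(2*(m1 + m2 + m3 + m4))) *
    (m1*m2*(r 0)^2 + m1*m3*(r 1)^2 + m1*m4*(r 2)^2 +
     m2*m3*(r 3)^2 + m2*m4*(r 4)^2 + m3*m4*(r 5)^2)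

/-- The mutual-distance vector
`r(q) = (r₁₂, r₁₃, r₁₄, r₂₃, r₂₄, r₃₄)` of a planar configuration `q`. -/
noncomputable def rvec (q : Fin 4 → EuclideanSpace ℝ (Fin 2)) : Fin 6 → ℝ :=
  ![dist (q 0) (q 1), dist (q 0) (q 2), dist (q 0) (q 3),
    dist (q 1) (q 2), dist (q 1) (q 3), dist (q 2) (q 3)]

noncomputable def dzclm (c0 c1 c2 c3 c4 c5 : ℝ) : (Fin 6 → ℝ) →L[ℝ] ℝ :=
  c0 • ContinuousLinearMap.proj 0 + c1 • ContinuousLinearMap.proj 1 +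
  c2 • ContinuousLinearMap.proj 2 + c3 • ContinuousLinearMap.proj 3 +
  c4 • ContinuousLinearMap.proj 4 + c5 • ContinuousLinearMap.proj 5

lemma dzclm_apply (c0 c1 c2 c3 c4 c5 : ℝ) (v : Fin 6 → ℝ) :
    dzclm c0 c1 c2 c3 c4 c5 v = c0 * v 0 + c1 * v 1 + c2 * v 2 + c3 * v 3 + c4 * v 4 + c5 * v 5 := by
  simp [dzclm]

noncomputable def dzpr (k : Fin 6) : (Fin 6 → ℝ) →L[ℝ] ℝ := ContinuousLinearMap.proj k
lemma dzpr_apply (k : Fin 6) (v : Fin 6 → ℝ) : dzpr k v = v k := rfl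
lemma hp (r : Fin 6 → ℝ) (k : Fin 6) : HasFDerivAt (fun v : Fin 6 → ℝ => v k) (dzpr k) r :=
  (dzpr k).hasFDerivAt

lemma dzclm_combo_iff {a b u0 u1 u2 u3 u4 u5 i0 i1 i2 i3 i4 i5 h0 h1 h2 h3 h4 h5 : ℝ} :
    (dzclm u0 u1 u2 u3 u4 u5 = a • dzclm i0 i1 i2 i3 i4 i5 + b • dzclm h0 h1 h2 h3 h4 h5) ↔
    (u0 = a * i0 + b * h0 ∧ u1 = a * i1 + b * h1 ∧ u2 = a * i2 + b * h2 ∧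
     u3 = a * i3 + b * h3 ∧ u4 = a * i4 + b * h4 ∧ u5 = a * i5 + b * h5) := by
  constructor
  · intro H
    refine ⟨?_, ?_, ?_, ?_, ?_, ?_⟩
    · simpa [dzclm_apply, Pi.single_apply] using
        congrArg (fun L : (Fin 6 → ℝ) →L[ℝ] ℝ => L (Pi.single 0 1)) H
    · simpa [dzclm_apply, Pi.single_apply] using
        congrArg (fun L : (Fin 6 → ℝ) →L[ℝ] ℝ => L (Pi.single 1 1)) H
    · simpa [dzclm_apply, Pi.single_apply] using
        congrArg (fun L : (Fin 6 → ℝ) →L[ℝ] ℝ => L (Pi.single 2 1)) H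
    · simpa [dzclm_apply, Pi.single_apply] using
        congrArg (fun L : (Fin 6 → ℝ) →L[ℝ] ℝ => L (Pi.single 3 1)) H
    · simpa [dzclm_apply, Pi.single_apply] using
        congrArg (fun L : (Fin 6 → ℝ) →L[ℝ] ℝ => L (Pi.single 4 1)) H
    · simpa [dzclm_apply, Pi.single_apply] using
        congrArg (fun L : (Fin 6 → ℝ) →L[ℝ] ℝ => L (Pi.single 5 1)) H
  · rintro ⟨e0, e1, e2, e3, e4, e5⟩
    refine ContinuousLinearMap.ext fun v => ?_
    simp only [ContinuousLinearMap.add_apply, ContinuousLinearMap.smul_apply, dzclm_apply,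
      smul_eq_mul]
    linear_combination v 0 * e0 + v 1 * e1 + v 2 * e2 + v 3 * e3 + v 4 * e4 + v 5 * e5

lemma dzvec (z w : EuclideanSpace ℝ (Fin 2)) (h0 : z 0 = w 0) (h1 : z 1 = w 1) : z = w := by
  ext c; fin_cases c
  · exact h0
  · exact h1

lemma core01 (t0 t1 t2 t3 b01 b02 b03 b12 b13 b23 : ℝ) (h0 : t0 ≠ 0) (h1 : t1 ≠ 0)
    (R1 : b01*t2 = b02*t1) (R2 : b01*t3 = b03*t1) (R3 : b01*t2 = b12*t0)
    (R4 : b01*t3 = b13*t0) (R5 : b02*t3 = b23*t0) :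
    ∃ s, b01 = s*t0*t1 ∧ b02 = s*t0*t2 ∧ b03 = s*t0*t3 ∧ b12 = s*t1*t2 ∧ b13 = s*t1*t3 ∧
      b23 = s*t2*t3 := by
  refine ⟨b01/(t0*t1), ?_, ?_, ?_, ?_, ?_, ?_⟩ <;> field_simp
  · linear_combination -R1
  · linear_combination -R2
  · linear_combination -R3
  · linear_combination -R4
  · linear_combination -t1*R5 - t3*R1

set_option maxHeartbeats 4000000 in
lemma master (m0 m1 m2 m3 x0 x1 x2 x3 y0 y1 y2 y3 r0 r1 r2 r3 r4 r5 u0 u1 u2 u3 u4 u5 : ℝ)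
    (hm0 : 0 < m0) (hm1 : 0 < m1) (hm2 : 0 < m2) (hm3 : 0 < m3)
    (hu0 : r0*u0 = 1) (hu1 : r1*u1 = 1) (hu2 : r2*u2 = 1) (hu3 : r3*u3 = 1) (hu4 : r4*u4 = 1) (hu5 : r5*u5 = 1)
    (hcma : m0*x0 + m1*x1 + m2*x2 + m3*x3 = 0) (hcmb : m0*y0 + m1*y1 + m2*y2 + m3*y3 = 0)
    (hnc : (x1*(y2*1 - (y3*1)) - (y1*(x2*1 - (x3*1))) + 1*(x2*y3 - (x3*y2))) ≠ 0 ∨ (-(x0*(y2*1 - (y3*1)) - (y0*(x2*1 - (x3*1))) + 1*(x2*y3 - (x3*y2)))) ≠ 0 ∨ (x0*(y1*1 - (y3*1)) - (y0*(x1*1 - (x3*1))) + 1*(x1*y3 - (x3*y1))) ≠ 0 ∨ (-(x0*(y1*1 - (y2*1)) - (y0*(x1*1 - (x2*1))) + 1*(x1*y2 - (x2*y1)))) ≠ 0) :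
    (∃ lam : ℝ, (lam*m0*x0 = m0*m1*u0^3*(x1 - (x0)) + m0*m2*u1^3*(x2 - (x0)) + m0*m3*u2^3*(x3 - (x0))) ∧ (lam*m0*y0 = m0*m1*u0^3*(y1 - (y0)) + m0*m2*u1^3*(y2 - (y0)) + m0*m3*u2^3*(y3 - (y0))) ∧ (lam*m1*x1 = m1*m0*u0^3*(x0 - (x1)) + m1*m2*u3^3*(x2 - (x1)) + m1*m3*u4^3*(x3 - (x1))) ∧ (lam*m1*y1 = m1*m0*u0^3*(y0 - (y1)) + m1*m2*u3^3*(y2 - (y1)) + m1*m3*u4^3*(y3 - (y1))) ∧ (lam*m2*x2 = m2*m0*u1^3*(x0 - (x2)) + m2*m1*u3^3*(x1 - (x2)) + m2*m3*u5^3*(x3 - (x2))) ∧ (lam*m2*y2 = m2*m0*u1^3*(y0 - (y2)) + m2*m1*u3^3*(y1 - (y2)) + m2*m3*u5^3*(y3 - (y2))) ∧ (lam*m3*x3 = m3*m0*u2^3*(x0 - (x3)) + m3*m1*u4^3*(x1 - (x3)) + m3*m2*u5^3*(x2 - (x3))) ∧ (lam*m3*y3 = m3*m0*u2^3*(y0 -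 (y3)) + m3*m1*u4^3*(y1 - (y3)) + m3*m2*u5^3*(y2 - (y3)))) ↔
    (∃ l e : ℝ, (-(m0*m1*u0^2) = l*(m0*m1*r0) + e*((-16)*r0*((x1*(y2*1 - (y3*1)) - (y1*(x2*1 - (x3*1))) + 1*(x2*y3 - (x3*y2)))*(-(x0*(y2*1 - (y3*1)) - (y0*(x2*1 - (x3*1))) + 1*(x2*y3 - (x3*y2))))))) ∧ (-(m0*m2*u1^2) = l*(m0*m2*r1) + e*((-16)*r1*((x1*(y2*1 - (y3*1)) - (y1*(x2*1 - (x3*1))) + 1*(x2*y3 - (x3*y2)))*(x0*(y1*1 - (y3*1)) - (y0*(x1*1 - (x3*1))) + 1*(x1*y3 - (x3*y1)))))) ∧ (-(m0*m3*u2^2) = l*(m0*m3*r2) + e*((-16)*r2*((x1*(y2*1 - (y3*1)) - (y1*(x2*1 - (x3*1))) + 1*(x2*y3 - (x3*y2)))*(-(x0*(y1*1 - (y2*1)) - (y0*(x1*1 - (x2*1))) + 1*(x1*y2 - (x2*y1))))))) ∧ (-(m1*m2*u3^2) = l*(m1*m2*r3) + e*((-16)*r3*((-(x0*(y2*1 -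 (y3*1)) - (y0*(x2*1 - (x3*1))) + 1*(x2*y3 - (x3*y2))))*(x0*(y1*1 - (y3*1)) - (y0*(x1*1 - (x3*1))) + 1*(x1*y3 - (x3*y1)))))) ∧ (-(m1*m3*u4^2) = l*(m1*m3*r4) + e*((-16)*r4*((-(x0*(y2*1 - (y3*1)) - (y0*(x2*1 - (x3*1))) + 1*(x2*y3 - (x3*y2))))*(-(x0*(y1*1 - (y2*1)) - (y0*(x1*1 - (x2*1))) + 1*(x1*y2 - (x2*y1))))))) ∧ (-(m2*m3*u5^2) = l*(m2*m3*r5) + e*((-16)*r5*((x0*(y1*1 - (y3*1)) - (y0*(x1*1 - (x3*1))) + 1*(x1*y3 - (x3*y1)))*(-(x0*(y1*1 - (y2*1)) - (y0*(x1*1 - (x2*1))) + 1*(x1*y2 - (x2*y1)))))))) := by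
  have hsum : ((x1*(y2*1 - (y3*1)) - (y1*(x2*1 - (x3*1))) + 1*(x2*y3 - (x3*y2)))) + ((-(x0*(y2*1 - (y3*1)) - (y0*(x2*1 - (x3*1))) + 1*(x2*y3 - (x3*y2))))) + ((x0*(y1*1 - (y3*1)) - (y0*(x1*1 - (x3*1))) + 1*(x1*y3 - (x3*y1)))) + ((-(x0*(y1*1 - (y2*1)) - (y0*(x1*1 - (x2*1))) + 1*(x1*y2 - (x2*y1))))) = 0 := by ring
  constructor
  · rintro ⟨lam, E0x, E0y, E1x, E1y, E2x, E2y, E3x, E3y⟩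
    have hB0x : ((m0+m1+m2+m3)*(m0*m1*u0^3) + lam*(m0*m1))*(x1 - (x0)) + ((m0+m1+m2+m3)*(m0*m2*u1^3) + lam*(m0*m2))*(x2 - (x0)) + ((m0+m1+m2+m3)*(m0*m3*u2^3) + lam*(m0*m3))*(x3 - (x0)) = 0 := by linear_combination (-(m0+m1+m2+m3))*E0x + lam*m0*hcma
    have hB0y : ((m0+m1+m2+m3)*(m0*m1*u0^3) + lam*(m0*m1))*(y1 - (y0)) + ((m0+m1+m2+m3)*(m0*m2*u1^3) + lam*(m0*m2))*(y2 - (y0)) + ((m0+m1+m2+m3)*(m0*m3*u2^3) + lam*(m0*m3))*(y3 - (y0)) = 0 := by linear_combination (-(m0+m1+m2+m3))*E0y + lam*m0*hcmb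
    have hB1x : ((m0+m1+m2+m3)*(m0*m1*u0^3) + lam*(m0*m1))*(x0 - (x1)) + ((m0+m1+m2+m3)*(m1*m2*u3^3) + lam*(m1*m2))*(x2 - (x1)) + ((m0+m1+m2+m3)*(m1*m3*u4^3) + lam*(m1*m3))*(x3 - (x1)) = 0 := by linear_combination (-(m0+m1+m2+m3))*E1x + lam*m1*hcma
    have hB1y : ((m0+m1+m2+m3)*(m0*m1*u0^3) + lam*(m0*m1))*(y0 - (y1)) + ((m0+m1+m2+m3)*(m1*m2*u3^3) + lam*(m1*m2))*(y2 - (y1)) + ((m0+m1+m2+m3)*(m1*m3*u4^3) + lam*(m1*m3))*(y3 - (y1)) = 0 := by linear_combination (-(m0+m1+m2+m3))*E1y + lam*m1*hcmb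
    have hB2x : ((m0+m1+m2+m3)*(m0*m2*u1^3) + lam*(m0*m2))*(x0 - (x2)) + ((m0+m1+m2+m3)*(m1*m2*u3^3) + lam*(m1*m2))*(x1 - (x2)) + ((m0+m1+m2+m3)*(m2*m3*u5^3) + lam*(m2*m3))*(x3 - (x2)) = 0 := by linear_combination (-(m0+m1+m2+m3))*E2x + lam*m2*hcma
    have hB2y : ((m0+m1+m2+m3)*(m0*m2*u1^3) + lam*(m0*m2))*(y0 - (y2)) + ((m0+m1+m2+m3)*(m1*m2*u3^3) + lam*(m1*m2))*(y1 - (y2)) + ((m0+m1+m2+m3)*(m2*m3*u5^3) + lam*(m2*m3))*(y3 - (y2)) = 0 := by linear_combination (-(m0+m1+m2+m3))*E2y + lam*m2*hcmb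
    have hB3x : ((m0+m1+m2+m3)*(m0*m3*u2^3) + lam*(m0*m3))*(x0 - (x3)) + ((m0+m1+m2+m3)*(m1*m3*u4^3) + lam*(m1*m3))*(x1 - (x3)) + ((m0+m1+m2+m3)*(m2*m3*u5^3) + lam*(m2*m3))*(x2 - (x3)) = 0 := by linear_combination (-(m0+m1+m2+m3))*E3x + lam*m3*hcma
    have hB3y : ((m0+m1+m2+m3)*(m0*m3*u2^3) + lam*(m0*m3))*(y0 - (y3)) + ((m0+m1+m2+m3)*(m1*m3*u4^3) + lam*(m1*m3))*(y1 - (y3)) + ((m0+m1+m2+m3)*(m2*m3*u5^3) + lam*(m2*m3))*(y2 - (y3)) = 0 := by linear_combination (-(m0+m1+m2+m3))*E3y + lam*m3*hcmb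
    have Rl0_12 : ((m0+m1+m2+m3)*(m0*m1*u0^3) + lam*(m0*m1))*(x0*(y1*1 - (y3*1)) - (y0*(x1*1 - (x3*1))) + 1*(x1*y3 - (x3*y1))) = ((m0+m1+m2+m3)*(m0*m2*u1^3) + lam*(m0*m2))*(-(x0*(y2*1 - (y3*1)) - (y0*(x2*1 - (x3*1))) + 1*(x2*y3 - (x3*y2)))) := by linear_combination (1*(y3 - (y0)))*hB0x + ((-1)*(x3 - (x0)))*hB0y
    have Rl0_13 : ((m0+m1+m2+m3)*(m0*m1*u0^3) + lam*(m0*m1))*(-(x0*(y1*1 - (y2*1)) - (y0*(x1*1 - (x2*1))) + 1*(x1*y2 - (x2*y1)))) = ((m0+m1+m2+m3)*(m0*m3*u2^3) + lam*(m0*m3))*(-(x0*(y2*1 - (y3*1)) - (y0*(x2*1 - (x3*1))) + 1*(x2*y3 - (x3*y2)))) := by linear_combination ((-1)*(y2 - (y0)))*hB0x + (1*(x2 - (x0)))*hB0y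
    have Rl0_23 : ((m0+m1+m2+m3)*(m0*m2*u1^3) + lam*(m0*m2))*(-(x0*(y1*1 - (y2*1)) - (y0*(x1*1 - (x2*1))) + 1*(x1*y2 - (x2*y1)))) = ((m0+m1+m2+m3)*(m0*m3*u2^3) + lam*(m0*m3))*(x0*(y1*1 - (y3*1)) - (y0*(x1*1 - (x3*1))) + 1*(x1*y3 - (x3*y1))) := by linear_combination (1*(y1 - (y0)))*hB0x + ((-1)*(x1 - (x0)))*hB0y
    have Rl1_02 : ((m0+m1+m2+m3)*(m0*m1*u0^3) + lam*(m0*m1))*(x0*(y1*1 - (y3*1)) - (y0*(x1*1 - (x3*1))) + 1*(x1*y3 - (x3*y1))) = ((m0+m1+m2+m3)*(m1*m2*u3^3) + lam*(m1*m2))*(x1*(y2*1 - (y3*1)) - (y1*(x2*1 - (x3*1))) + 1*(x2*y3 - (x3*y2))) := by linear_combination ((-1)*(y3 - (y1)))*hB1x + (1*(x3 - (x1)))*hB1y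
    have Rl1_03 : ((m0+m1+m2+m3)*(m0*m1*u0^3) + lam*(m0*m1))*(-(x0*(y1*1 - (y2*1)) - (y0*(x1*1 - (x2*1))) + 1*(x1*y2 - (x2*y1)))) = ((m0+m1+m2+m3)*(m1*m3*u4^3) + lam*(m1*m3))*(x1*(y2*1 - (y3*1)) - (y1*(x2*1 - (x3*1))) + 1*(x2*y3 - (x3*y2))) := by linear_combination (1*(y2 - (y1)))*hB1x + ((-1)*(x2 - (x1)))*hB1y
    have Rl1_23 : ((m0+m1+m2+m3)*(m1*m2*u3^3) + lam*(m1*m2))*(-(x0*(y1*1 - (y2*1)) - (y0*(x1*1 - (x2*1))) + 1*(x1*y2 - (x2*y1)))) = ((m0+m1+m2+m3)*(m1*m3*u4^3) + lam*(m1*m3))*(x0*(y1*1 - (y3*1)) - (y0*(x1*1 - (x3*1))) + 1*(x1*y3 - (x3*y1))) := by linear_combination ((-1)*(y0 - (y1)))*hB1x + (1*(x0 - (x1)))*hB1y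
    have Rl2_01 : ((m0+m1+m2+m3)*(m0*m2*u1^3) + lam*(m0*m2))*(-(x0*(y2*1 - (y3*1)) - (y0*(x2*1 - (x3*1))) + 1*(x2*y3 - (x3*y2)))) = ((m0+m1+m2+m3)*(m1*m2*u3^3) + lam*(m1*m2))*(x1*(y2*1 - (y3*1)) - (y1*(x2*1 - (x3*1))) + 1*(x2*y3 - (x3*y2))) := by linear_combination (1*(y3 - (y2)))*hB2x + ((-1)*(x3 - (x2)))*hB2y
    have Rl2_03 : ((m0+m1+m2+m3)*(m0*m2*u1^3) + lam*(m0*m2))*(-(x0*(y1*1 - (y2*1)) - (y0*(x1*1 - (x2*1))) + 1*(x1*y2 - (x2*y1)))) = ((m0+m1+m2+m3)*(m2*m3*u5^3) + lam*(m2*m3))*(x1*(y2*1 - (y3*1)) - (y1*(x2*1 - (x3*1))) + 1*(x2*y3 - (x3*y2))) := by linear_combination ((-1)*(y1 - (y2)))*hB2x + (1*(x1 - (x2)))*hB2y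
    have Rl2_13 : ((m0+m1+m2+m3)*(m1*m2*u3^3) + lam*(m1*m2))*(-(x0*(y1*1 - (y2*1)) - (y0*(x1*1 - (x2*1))) + 1*(x1*y2 - (x2*y1)))) = ((m0+m1+m2+m3)*(m2*m3*u5^3) + lam*(m2*m3))*(-(x0*(y2*1 - (y3*1)) - (y0*(x2*1 - (x3*1))) + 1*(x2*y3 - (x3*y2)))) := by linear_combination (1*(y0 - (y2)))*hB2x + ((-1)*(x0 - (x2)))*hB2y
    have Rl3_01 : ((m0+m1+m2+m3)*(m0*m3*u2^3) + lam*(m0*m3))*(-(x0*(y2*1 - (y3*1)) - (y0*(x2*1 - (x3*1))) + 1*(x2*y3 - (x3*y2)))) = ((m0+m1+m2+m3)*(m1*m3*u4^3) + lam*(m1*m3))*(x1*(y2*1 - (y3*1)) - (y1*(x2*1 - (x3*1))) + 1*(x2*y3 - (x3*y2))) := by linear_combination ((-1)*(y2 - (y3)))*hB3x + (1*(x2 - (x3)))*hB3y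
    have Rl3_02 : ((m0+m1+m2+m3)*(m0*m3*u2^3) + lam*(m0*m3))*(x0*(y1*1 - (y3*1)) - (y0*(x1*1 - (x3*1))) + 1*(x1*y3 - (x3*y1))) = ((m0+m1+m2+m3)*(m2*m3*u5^3) + lam*(m2*m3))*(x1*(y2*1 - (y3*1)) - (y1*(x2*1 - (x3*1))) + 1*(x2*y3 - (x3*y2))) := by linear_combination (1*(y1 - (y3)))*hB3x + ((-1)*(x1 - (x3)))*hB3y
    have Rl3_12 : ((m0+m1+m2+m3)*(m1*m3*u4^3) + lam*(m1*m3))*(x0*(y1*1 - (y3*1)) - (y0*(x1*1 - (x3*1))) + 1*(x1*y3 - (x3*y1))) = ((m0+m1+m2+m3)*(m2*m3*u5^3) + lam*(m2*m3))*(-(x0*(y2*1 - (y3*1)) - (y0*(x2*1 - (x3*1))) + 1*(x2*y3 - (x3*y2)))) := by linear_combination ((-1)*(y0 - (y3)))*hB3x + (1*(x0 - (x3)))*hB3y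
    have hpair : (((x1*(y2*1 - (y3*1)) - (y1*(x2*1 - (x3*1))) + 1*(x2*y3 - (x3*y2)))) ≠ 0 ∧ ((-(x0*(y2*1 - (y3*1)) - (y0*(x2*1 - (x3*1))) + 1*(x2*y3 - (x3*y2))))) ≠ 0) ∨ (((x1*(y2*1 - (y3*1)) - (y1*(x2*1 - (x3*1))) + 1*(x2*y3 - (x3*y2)))) ≠ 0 ∧ ((x0*(y1*1 - (y3*1)) - (y0*(x1*1 - (x3*1))) + 1*(x1*y3 - (x3*y1)))) ≠ 0) ∨ (((x1*(y2*1 - (y3*1)) - (y1*(x2*1 - (x3*1))) + 1*(x2*y3 - (x3*y2)))) ≠ 0 ∧ ((-(x0*(y1*1 - (y2*1)) - (y0*(x1*1 - (x2*1))) + 1*(x1*y2 - (x2*y1))))) ≠ 0) ∨ (((-(x0*(y2*1 - (y3*1)) - (y0*(x2*1 - (x3*1))) + 1*(x2*y3 - (x3*y2))))) ≠ 0 ∧ ((x0*(y1*1 - (y3*1)) - (y0*(x1*1 - (x3*1))) + 1*(x1*y3 - (x3*y1)))) ≠ 0) ∨ (((-(x0*(y2*1 - (y3*1)) - (y0*(x2*1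 - (x3*1))) + 1*(x2*y3 - (x3*y2))))) ≠ 0 ∧ ((-(x0*(y1*1 - (y2*1)) - (y0*(x1*1 - (x2*1))) + 1*(x1*y2 - (x2*y1))))) ≠ 0) ∨ (((x0*(y1*1 - (y3*1)) - (y0*(x1*1 - (x3*1))) + 1*(x1*y3 - (x3*y1)))) ≠ 0 ∧ ((-(x0*(y1*1 - (y2*1)) - (y0*(x1*1 - (x2*1))) + 1*(x1*y2 - (x2*y1))))) ≠ 0) := by
      by_cases h0 : ((x1*(y2*1 - (y3*1)) - (y1*(x2*1 - (x3*1))) + 1*(x2*y3 - (x3*y2)))) = 0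
      · by_cases h1 : ((-(x0*(y2*1 - (y3*1)) - (y0*(x2*1 - (x3*1))) + 1*(x2*y3 - (x3*y2))))) = 0
        · by_cases h2 : ((x0*(y1*1 - (y3*1)) - (y0*(x1*1 - (x3*1))) + 1*(x1*y3 - (x3*y1)))) = 0
          · by_cases h3 : ((-(x0*(y1*1 - (y2*1)) - (y0*(x1*1 - (x2*1))) + 1*(x1*y2 - (x2*y1))))) = 0
            · exfalso; rcases hnc with hh|hh|hh|hh
              exacts [hh h0, hh h1, hh h2, hh h3]
            · exact absurd (by linear_combination hsum - h0 - h1 - h2) h3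
          · by_cases h3 : ((-(x0*(y1*1 - (y2*1)) - (y0*(x1*1 - (x2*1))) + 1*(x1*y2 - (x2*y1))))) = 0
            · exact absurd (by linear_combination hsum - h0 - h1 - h3) h2
            · exact Or.inr (Or.inr (Or.inr (Or.inr (Or.inr (⟨h2, h3⟩)))))
        · by_cases h2 : ((x0*(y1*1 - (y3*1)) - (y0*(x1*1 - (x3*1))) + 1*(x1*y3 - (x3*y1)))) = 0
          · by_cases h3 : ((-(x0*(y1*1 - (y2*1)) - (y0*(x1*1 - (x2*1))) + 1*(x1*y2 - (x2*y1))))) = 0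
            · exact absurd (by linear_combination hsum - h0 - h2 - h3) h1
            · exact Or.inr (Or.inr (Or.inr (Or.inr (Or.inl ⟨h1, h3⟩))))
          · by_cases h3 : ((-(x0*(y1*1 - (y2*1)) - (y0*(x1*1 - (x2*1))) + 1*(x1*y2 - (x2*y1))))) = 0
            · exact Or.inr (Or.inr (Or.inr (Or.inl ⟨h1, h2⟩)))
            · exact Or.inr (Or.inr (Or.inr (Or.inl ⟨h1, h2⟩)))
      · by_cases h1 : ((-(x0*(y2*1 - (y3*1)) - (y0*(x2*1 - (x3*1))) + 1*(x2*y3 - (x3*y2))))) = 0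
        · by_cases h2 : ((x0*(y1*1 - (y3*1)) - (y0*(x1*1 - (x3*1))) + 1*(x1*y3 - (x3*y1)))) = 0
          · by_cases h3 : ((-(x0*(y1*1 - (y2*1)) - (y0*(x1*1 - (x2*1))) + 1*(x1*y2 - (x2*y1))))) = 0
            · exact absurd (by linear_combination hsum - h1 - h2 - h3) h0
            · exact Or.inr (Or.inr (Or.inl ⟨h0, h3⟩))
          · by_cases h3 : ((-(x0*(y1*1 - (y2*1)) - (y0*(x1*1 - (x2*1))) + 1*(x1*y2 - (x2*y1))))) = 0
            · exact Or.inr (Or.inl ⟨h0, h2⟩)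
            · exact Or.inr (Or.inl ⟨h0, h2⟩)
        · by_cases h2 : ((x0*(y1*1 - (y3*1)) - (y0*(x1*1 - (x3*1))) + 1*(x1*y3 - (x3*y1)))) = 0
          · by_cases h3 : ((-(x0*(y1*1 - (y2*1)) - (y0*(x1*1 - (x2*1))) + 1*(x1*y2 - (x2*y1))))) = 0
            · exact Or.inl ⟨h0, h1⟩
            · exact Or.inl ⟨h0, h1⟩
          · by_cases h3 : ((-(x0*(y1*1 - (y2*1)) - (y0*(x1*1 - (x2*1))) + 1*(x1*y2 - (x2*y1))))) = 0
            · exact Or.inl ⟨h0, h1⟩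
            · exact Or.inl ⟨h0, h1⟩
    have hsig : ∃ s : ℝ, (((m0+m1+m2+m3)*(m0*m1*u0^3) + lam*(m0*m1)) = s*((x1*(y2*1 - (y3*1)) - (y1*(x2*1 - (x3*1))) + 1*(x2*y3 - (x3*y2))))*((-(x0*(y2*1 - (y3*1)) - (y0*(x2*1 - (x3*1))) + 1*(x2*y3 - (x3*y2)))))) ∧ (((m0+m1+m2+m3)*(m0*m2*u1^3) + lam*(m0*m2)) = s*((x1*(y2*1 - (y3*1)) - (y1*(x2*1 - (x3*1))) + 1*(x2*y3 - (x3*y2))))*((x0*(y1*1 - (y3*1)) - (y0*(x1*1 - (x3*1))) + 1*(x1*y3 - (x3*y1))))) ∧ (((m0+m1+m2+m3)*(m0*m3*u2^3) + lam*(m0*m3)) = s*((x1*(y2*1 - (y3*1)) - (y1*(x2*1 - (x3*1))) + 1*(x2*y3 - (x3*y2))))*((-(x0*(y1*1 - (y2*1)) - (y0*(x1*1 - (x2*1))) + 1*(x1*y2 - (x2*y1)))))) ∧ (((m0+m1+m2+m3)*(m1*m2*u3^3) + lam*(m1*m2)) = s*((-(x0*(y2*1 - (y3*1)) - (y0*(x2*1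 - (x3*1))) + 1*(x2*y3 - (x3*y2)))))*((x0*(y1*1 - (y3*1)) - (y0*(x1*1 - (x3*1))) + 1*(x1*y3 - (x3*y1))))) ∧ (((m0+m1+m2+m3)*(m1*m3*u4^3) + lam*(m1*m3)) = s*((-(x0*(y2*1 - (y3*1)) - (y0*(x2*1 - (x3*1))) + 1*(x2*y3 - (x3*y2)))))*((-(x0*(y1*1 - (y2*1)) - (y0*(x1*1 - (x2*1))) + 1*(x1*y2 - (x2*y1)))))) ∧ (((m0+m1+m2+m3)*(m2*m3*u5^3) + lam*(m2*m3)) = s*((x0*(y1*1 - (y3*1)) - (y0*(x1*1 - (x3*1))) + 1*(x1*y3 - (x3*y1))))*((-(x0*(y1*1 - (y2*1)) - (y0*(x1*1 - (x2*1))) + 1*(x1*y2 - (x2*y1)))))) := by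
      rcases hpair with ⟨hp,hq⟩|⟨hp,hq⟩|⟨hp,hq⟩|⟨hp,hq⟩|⟨hp,hq⟩|⟨hp,hq⟩
      · obtain ⟨s, c1, c2, c3, c4, c5, c6⟩ := core01 ((x1*(y2*1 - (y3*1)) - (y1*(x2*1 - (x3*1))) + 1*(x2*y3 - (x3*y2)))) ((-(x0*(y2*1 - (y3*1)) - (y0*(x2*1 - (x3*1))) + 1*(x2*y3 - (x3*y2))))) ((x0*(y1*1 - (y3*1)) - (y0*(x1*1 - (x3*1))) + 1*(x1*y3 - (x3*y1)))) ((-(x0*(y1*1 - (y2*1)) - (y0*(x1*1 - (x2*1))) + 1*(x1*y2 - (x2*y1))))) (((m0+m1+m2+m3)*(m0*m1*u0^3) + lam*(m0*m1))) (((m0+m1+m2+m3)*(m0*m2*u1^3) + lam*(m0*m2))) (((m0+m1+m2+m3)*(m0*m3*u2^3) + lam*(m0*m3))) (((m0+m1+m2+m3)*(m1*m2*u3^3) + lam*(m1*m2))) (((m0+m1+m2+m3)*(m1*m3*u4^3) + lam*(m1*m3))) (((m0+m1+m2+m3)*(m2*m3*u5^3) + lam*(m2*m3))) hp hq Rl0_12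 Rl0_13 Rl1_02 Rl1_03 Rl2_03
        exact ⟨s, by linear_combination c1, by linear_combination c2, by linear_combination c3, by linear_combination c4, by linear_combination c5, by linear_combination c6⟩
      · obtain ⟨s, c1, c2, c3, c4, c5, c6⟩ := core01 ((x1*(y2*1 - (y3*1)) - (y1*(x2*1 - (x3*1))) + 1*(x2*y3 - (x3*y2)))) ((x0*(y1*1 - (y3*1)) - (y0*(x1*1 - (x3*1))) + 1*(x1*y3 - (x3*y1)))) ((-(x0*(y2*1 - (y3*1)) - (y0*(x2*1 - (x3*1))) + 1*(x2*y3 - (x3*y2))))) ((-(x0*(y1*1 - (y2*1)) - (y0*(x1*1 - (x2*1))) + 1*(x1*y2 - (x2*y1))))) (((m0+m1+m2+m3)*(m0*m2*u1^3) + lam*(m0*m2))) (((m0+m1+m2+m3)*(m0*m1*u0^3) + lam*(m0*m1))) (((m0+m1+m2+m3)*(m0*m3*u2^3) + lam*(m0*m3))) (((m0+m1+m2+m3)*(m1*m2*u3^3) + lam*(m1*m2))) (((m0+m1+m2+m3)*(m2*m3*u5^3) + lam*(m2*m3))) (((m0+m1+m2+m3)*(m1*m3*u4^3) + lam*(m1*m3)))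 hp hq Rl0_12.symm Rl0_23 Rl2_01 Rl2_03 Rl1_03
        exact ⟨s, by linear_combination c2, by linear_combination c1, by linear_combination c3, by linear_combination c4, by linear_combination c6, by linear_combination c5⟩
      · obtain ⟨s, c1, c2, c3, c4, c5, c6⟩ := core01 ((x1*(y2*1 - (y3*1)) - (y1*(x2*1 - (x3*1))) + 1*(x2*y3 - (x3*y2)))) ((-(x0*(y1*1 - (y2*1)) - (y0*(x1*1 - (x2*1))) + 1*(x1*y2 - (x2*y1))))) ((-(x0*(y2*1 - (y3*1)) - (y0*(x2*1 - (x3*1))) + 1*(x2*y3 - (x3*y2))))) ((x0*(y1*1 - (y3*1)) - (y0*(x1*1 - (x3*1))) + 1*(x1*y3 - (x3*y1)))) (((m0+m1+m2+m3)*(m0*m3*u2^3) + lam*(m0*m3))) (((m0+m1+m2+m3)*(m0*m1*u0^3) + lam*(m0*m1))) (((m0+m1+m2+m3)*(m0*m2*u1^3) + lam*(m0*m2))) (((m0+m1+m2+m3)*(m1*m3*u4^3) + lam*(m1*m3))) (((m0+m1+m2+m3)*(m2*m3*u5^3) + lam*(m2*m3))) (((m0+m1+m2+m3)*(m1*m2*u3^3)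 + lam*(m1*m2))) hp hq Rl0_13.symm Rl0_23.symm Rl3_01 Rl3_02 Rl1_02
        exact ⟨s, by linear_combination c2, by linear_combination c3, by linear_combination c1, by linear_combination c6, by linear_combination c4, by linear_combination c5⟩
      · obtain ⟨s, c1, c2, c3, c4, c5, c6⟩ := core01 ((-(x0*(y2*1 - (y3*1)) - (y0*(x2*1 - (x3*1))) + 1*(x2*y3 - (x3*y2))))) ((x0*(y1*1 - (y3*1)) - (y0*(x1*1 - (x3*1))) + 1*(x1*y3 - (x3*y1)))) ((x1*(y2*1 - (y3*1)) - (y1*(x2*1 - (x3*1))) + 1*(x2*y3 - (x3*y2)))) ((-(x0*(y1*1 - (y2*1)) - (y0*(x1*1 - (x2*1))) + 1*(x1*y2 - (x2*y1))))) (((m0+m1+m2+m3)*(m1*m2*u3^3) + lam*(m1*m2))) (((m0+m1+m2+m3)*(m0*m1*u0^3) + lam*(m0*m1))) (((m0+m1+m2+m3)*(m1*m3*u4^3) + lam*(m1*m3))) (((m0+m1+m2+m3)*(m0*m2*u1^3) + lam*(m0*m2))) (((m0+m1+m2+m3)*(m2*m3*u5^3) + lam*(m2*m3))) (((m0+m1+m2+m3)*(m0*m3*u2^3)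 + lam*(m0*m3))) hp hq Rl1_02.symm Rl1_23 Rl2_01.symm Rl2_13 Rl0_13
        exact ⟨s, by linear_combination c2, by linear_combination c4, by linear_combination c6, by linear_combination c1, by linear_combination c3, by linear_combination c5⟩
      · obtain ⟨s, c1, c2, c3, c4, c5, c6⟩ := core01 ((-(x0*(y2*1 - (y3*1)) - (y0*(x2*1 - (x3*1))) + 1*(x2*y3 - (x3*y2))))) ((-(x0*(y1*1 - (y2*1)) - (y0*(x1*1 - (x2*1))) + 1*(x1*y2 - (x2*y1))))) ((x1*(y2*1 - (y3*1)) - (y1*(x2*1 - (x3*1))) + 1*(x2*y3 - (x3*y2)))) ((x0*(y1*1 - (y3*1)) - (y0*(x1*1 - (x3*1))) + 1*(x1*y3 - (x3*y1)))) (((m0+m1+m2+m3)*(m1*m3*u4^3) + lam*(m1*m3))) (((m0+m1+m2+m3)*(m0*m1*u0^3) + lam*(m0*m1))) (((m0+m1+m2+m3)*(m1*m2*u3^3) + lam*(m1*m2))) (((m0+m1+m2+m3)*(m0*m3*u2^3) + lam*(m0*m3))) (((m0+m1+m2+m3)*(m2*m3*u5^3) + lam*(m2*m3))) (((m0+m1+m2+m3)*(m0*m2*u1^3)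 + lam*(m0*m2))) hp hq Rl1_03.symm Rl1_23.symm Rl3_01.symm Rl3_12 Rl0_12
        exact ⟨s, by linear_combination c2, by linear_combination c6, by linear_combination c4, by linear_combination c3, by linear_combination c1, by linear_combination c5⟩
      · obtain ⟨s, c1, c2, c3, c4, c5, c6⟩ := core01 ((x0*(y1*1 - (y3*1)) - (y0*(x1*1 - (x3*1))) + 1*(x1*y3 - (x3*y1)))) ((-(x0*(y1*1 - (y2*1)) - (y0*(x1*1 - (x2*1))) + 1*(x1*y2 - (x2*y1))))) ((x1*(y2*1 - (y3*1)) - (y1*(x2*1 - (x3*1))) + 1*(x2*y3 - (x3*y2)))) ((-(x0*(y2*1 - (y3*1)) - (y0*(x2*1 - (x3*1))) + 1*(x2*y3 - (x3*y2))))) (((m0+m1+m2+m3)*(m2*m3*u5^3) + lam*(m2*m3))) (((m0+m1+m2+m3)*(m0*m2*u1^3) + lam*(m0*m2))) (((m0+m1+m2+m3)*(m1*m2*u3^3) + lam*(m1*m2))) (((m0+m1+m2+m3)*(m0*m3*u2^3) + lam*(m0*m3))) (((m0+m1+m2+m3)*(m1*m3*u4^3) + lam*(m1*m3))) (((m0+m1+m2+m3)*(m0*m1*u0^3)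 + lam*(m0*m1))) hp hq Rl2_03.symm Rl2_13.symm Rl3_02.symm Rl3_12.symm Rl0_12.symm
        exact ⟨s, by linear_combination c6, by linear_combination c2, by linear_combination c4, by linear_combination c3, by linear_combination c5, by linear_combination c1⟩
    obtain ⟨sg, d0, d1, d2, d3, d4, d5⟩ := hsig
    obtain ⟨uM, huM⟩ : ∃ z : ℝ, (m0+m1+m2+m3)*z = 1 := ⟨(m0+m1+m2+m3)⁻¹, mul_inv_cancel₀ (by positivity)⟩
    refine ⟨lam*uM, sg*uM/16, ?_, ?_, ?_, ?_, ?_, ?_⟩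
    · linear_combination (-(uM*r0))*d0 + (m0*m1*u0^2*(m0+m1+m2+m3)*uM)*hu0 + (m0*m1*u0^2)*huM
    · linear_combination (-(uM*r1))*d1 + (m0*m2*u1^2*(m0+m1+m2+m3)*uM)*hu1 + (m0*m2*u1^2)*huM
    · linear_combination (-(uM*r2))*d2 + (m0*m3*u2^2*(m0+m1+m2+m3)*uM)*hu2 + (m0*m3*u2^2)*huM
    · linear_combination (-(uM*r3))*d3 + (m1*m2*u3^2*(m0+m1+m2+m3)*uM)*hu3 + (m1*m2*u3^2)*huM
    · linear_combination (-(uM*r4))*d4 + (m1*m3*u4^2*(m0+m1+m2+m3)*uM)*hu4 + (m1*m3*u4^2)*huM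
    · linear_combination (-(uM*r5))*d5 + (m2*m3*u5^2*(m0+m1+m2+m3)*uM)*hu5 + (m2*m3*u5^2)*huM
  · rintro ⟨l, e, C0, C1, C2, C3, C4, C5⟩
    have D0 : m0*m1*u0^3 = -(l*(m0*m1)) + 16*e*(((x1*(y2*1 - (y3*1)) - (y1*(x2*1 - (x3*1))) + 1*(x2*y3 - (x3*y2))))*((-(x0*(y2*1 - (y3*1)) - (y0*(x2*1 - (x3*1))) + 1*(x2*y3 - (x3*y2)))))) := by linear_combination (-(u0))*C0 + (-(l*(m0*m1)) + 16*e*(((x1*(y2*1 - (y3*1)) - (y1*(x2*1 - (x3*1))) + 1*(x2*y3 - (x3*y2))))*((-(x0*(y2*1 - (y3*1)) - (y0*(x2*1 - (x3*1))) + 1*(x2*y3 - (x3*y2)))))))*hu0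
    have D1 : m0*m2*u1^3 = -(l*(m0*m2)) + 16*e*(((x1*(y2*1 - (y3*1)) - (y1*(x2*1 - (x3*1))) + 1*(x2*y3 - (x3*y2))))*((x0*(y1*1 - (y3*1)) - (y0*(x1*1 - (x3*1))) + 1*(x1*y3 - (x3*y1))))) := by linear_combination (-(u1))*C1 + (-(l*(m0*m2)) + 16*e*(((x1*(y2*1 - (y3*1)) - (y1*(x2*1 - (x3*1))) + 1*(x2*y3 - (x3*y2))))*((x0*(y1*1 - (y3*1)) - (y0*(x1*1 - (x3*1))) + 1*(x1*y3 - (x3*y1))))))*hu1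
    have D2 : m0*m3*u2^3 = -(l*(m0*m3)) + 16*e*(((x1*(y2*1 - (y3*1)) - (y1*(x2*1 - (x3*1))) + 1*(x2*y3 - (x3*y2))))*((-(x0*(y1*1 - (y2*1)) - (y0*(x1*1 - (x2*1))) + 1*(x1*y2 - (x2*y1)))))) := by linear_combination (-(u2))*C2 + (-(l*(m0*m3)) + 16*e*(((x1*(y2*1 - (y3*1)) - (y1*(x2*1 - (x3*1))) + 1*(x2*y3 - (x3*y2))))*((-(x0*(y1*1 - (y2*1)) - (y0*(x1*1 - (x2*1))) + 1*(x1*y2 - (x2*y1)))))))*hu2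
    have D3 : m1*m2*u3^3 = -(l*(m1*m2)) + 16*e*(((-(x0*(y2*1 - (y3*1)) - (y0*(x2*1 - (x3*1))) + 1*(x2*y3 - (x3*y2)))))*((x0*(y1*1 - (y3*1)) - (y0*(x1*1 - (x3*1))) + 1*(x1*y3 - (x3*y1))))) := by linear_combination (-(u3))*C3 + (-(l*(m1*m2)) + 16*e*(((-(x0*(y2*1 - (y3*1)) - (y0*(x2*1 - (x3*1))) + 1*(x2*y3 - (x3*y2)))))*((x0*(y1*1 - (y3*1)) - (y0*(x1*1 - (x3*1))) + 1*(x1*y3 - (x3*y1))))))*hu3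
    have D4 : m1*m3*u4^3 = -(l*(m1*m3)) + 16*e*(((-(x0*(y2*1 - (y3*1)) - (y0*(x2*1 - (x3*1))) + 1*(x2*y3 - (x3*y2)))))*((-(x0*(y1*1 - (y2*1)) - (y0*(x1*1 - (x2*1))) + 1*(x1*y2 - (x2*y1)))))) := by linear_combination (-(u4))*C4 + (-(l*(m1*m3)) + 16*e*(((-(x0*(y2*1 - (y3*1)) - (y0*(x2*1 - (x3*1))) + 1*(x2*y3 - (x3*y2)))))*((-(x0*(y1*1 - (y2*1)) - (y0*(x1*1 - (x2*1))) + 1*(x1*y2 - (x2*y1)))))))*hu4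
    have D5 : m2*m3*u5^3 = -(l*(m2*m3)) + 16*e*(((x0*(y1*1 - (y3*1)) - (y0*(x1*1 - (x3*1))) + 1*(x1*y3 - (x3*y1))))*((-(x0*(y1*1 - (y2*1)) - (y0*(x1*1 - (x2*1))) + 1*(x1*y2 - (x2*y1)))))) := by linear_combination (-(u5))*C5 + (-(l*(m2*m3)) + 16*e*(((x0*(y1*1 - (y3*1)) - (y0*(x1*1 - (x3*1))) + 1*(x1*y3 - (x3*y1))))*((-(x0*(y1*1 - (y2*1)) - (y0*(x1*1 - (x2*1))) + 1*(x1*y2 - (x2*y1)))))))*hu5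
    refine ⟨l*(m0+m1+m2+m3), ?_, ?_, ?_, ?_, ?_, ?_, ?_, ?_⟩
    · linear_combination (-(x1 - x0))*D0 + (-(x2 - x0))*D1 + (-(x3 - x0))*D2 + (l*m0)*hcma
    · linear_combination (-(y1 - y0))*D0 + (-(y2 - y0))*D1 + (-(y3 - y0))*D2 + (l*m0)*hcmb
    · linear_combination (-(x0 - x1))*D0 + (-(x2 - x1))*D3 + (-(x3 - x1))*D4 + (l*m1)*hcma
    · linear_combination (-(y0 - y1))*D0 + (-(y2 - y1))*D3 + (-(y3 - y1))*D4 + (l*m1)*hcmb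
    · linear_combination (-(x0 - x2))*D1 + (-(x1 - x2))*D3 + (-(x3 - x2))*D5 + (l*m2)*hcma
    · linear_combination (-(y0 - y2))*D1 + (-(y1 - y2))*D3 + (-(y3 - y2))*D5 + (l*m2)*hcmb
    · linear_combination (-(x0 - x3))*D2 + (-(x1 - x3))*D4 + (-(x2 - x3))*D5 + (l*m3)*hcma
    · linear_combination (-(y0 - y3))*D2 + (-(y1 - y3))*D4 + (-(y2 - y3))*D5 + (l*m3)*hcmb

lemma dzHasFDerivAt_Uvec (m1 m2 m3 m4 : ℝ) (r : Fin 6 → ℝ) (h : ∀ k, r k ≠ 0) :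
    HasFDerivAt (Uvec m1 m2 m3 m4)
      (dzclm (-(m1*m2/(r 0)^2)) (-(m1*m3/(r 1)^2)) (-(m1*m4/(r 2)^2)) (-(m2*m3/(r 3)^2))
        (-(m2*m4/(r 4)^2)) (-(m3*m4/(r 5)^2))) r := by
  have e : Uvec m1 m2 m3 m4 = fun v : Fin 6 → ℝ =>
      m1*m2*(v 0)⁻¹ + m1*m3*(v 1)⁻¹ + m1*m4*(v 2)⁻¹ + m2*m3*(v 3)⁻¹ + m2*m4*(v 4)⁻¹ +
        m3*m4*(v 5)⁻¹ := by
    funext v; simp [Uvec, div_eq_mul_inv]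
  rw [e]
  have hv : ∀ k, HasFDerivAt (fun v : Fin 6 → ℝ => (v k)⁻¹) ((-(r k ^ 2)⁻¹) • dzpr k) r :=
    fun k => (hasDerivAt_inv (h k)).comp_hasFDerivAt r (hp r k)
  refine HasFDerivAt.congr_fderiv ((((((((hv 0).const_mul (m1*m2)).add
    ((hv 1).const_mul (m1*m3))).add ((hv 2).const_mul (m1*m4))).add
    ((hv 3).const_mul (m2*m3))).add ((hv 4).const_mul (m2*m4))).add
    ((hv 5).const_mul (m3*m4)))) ?_
  refine ContinuousLinearMap.ext fun v => ?_
  simp only [ContinuousLinearMap.add_apply, ContinuousLinearMap.smul_apply, dzpr_apply,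
    dzclm_apply, smul_eq_mul]
  ring

lemma dzHasFDerivAt_Ivec (m1 m2 m3 m4 : ℝ) (r : Fin 6 → ℝ) :
    HasFDerivAt (Ivec m1 m2 m3 m4)
      (dzclm ((1/(2*(m1+m2+m3+m4)))*(2*(m1*m2)*r 0)) ((1/(2*(m1+m2+m3+m4)))*(2*(m1*m3)*r 1))
        ((1/(2*(m1+m2+m3+m4)))*(2*(m1*m4)*r 2)) ((1/(2*(m1+m2+m3+m4)))*(2*(m2*m3)*r 3))
        ((1/(2*(m1+m2+m3+m4)))*(2*(m2*m4)*r 4)) ((1/(2*(m1+m2+m3+m4)))*(2*(m3*m4)*r 5))) r := by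
  have e : Ivec m1 m2 m3 m4 = fun v : Fin 6 → ℝ =>
      (1/(2*(m1+m2+m3+m4))) * (m1*m2*(v 0 * v 0) + m1*m3*(v 1 * v 1) + m1*m4*(v 2 * v 2) +
        m2*m3*(v 3 * v 3) + m2*m4*(v 4 * v 4) + m3*m4*(v 5 * v 5)) := by
    funext v; simp only [Ivec]; ring
  rw [e]
  refine HasFDerivAt.congr_fderiv (((((((((hp r 0).mul (hp r 0)).const_mul (m1*m2)).add
    (((hp r 1).mul (hp r 1)).const_mul (m1*m3))).add
    (((hp r 2).mul (hp r 2)).const_mul (m1*m4))).add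
    (((hp r 3).mul (hp r 3)).const_mul (m2*m3))).add
    (((hp r 4).mul (hp r 4)).const_mul (m2*m4))).add
    (((hp r 5).mul (hp r 5)).const_mul (m3*m4))).const_mul (1/(2*(m1+m2+m3+m4)))) ?_
  refine ContinuousLinearMap.ext fun v => ?_
  simp only [ContinuousLinearMap.add_apply, ContinuousLinearMap.smul_apply, dzpr_apply,
    dzclm_apply, smul_eq_mul]
  ring

set_option maxHeartbeats 4000000 in
lemma dzHasFDerivAt_Hvec (r : Fin 6 → ℝ) :
    HasFDerivAt Hvec (dzclm (2 * r 0 * (((-2 : ℝ))*((r 5)^2)^2 + ((2 : ℝ))*(r 4)^2*(r 5)^2 + ((2 : ℝ))*(r 3)^2*(r 5)^2 + ((2 : ℝ))*(r 2)^2*(r 5)^2 + ((-2 : ℝ))*(r 2)^2*(r 4)^2 + ((2 : ℝ))*(r 2)^2*(r 3)^2 + ((2 : ℝ))*(r 1)^2*(r 5)^2 + ((2 : ℝ))*(r 1)^2*(r 4)^2 + ((-2 : ℝ))*(r 1)^2*(r 3)^2 + ((-4 : ℝ))*(r 0)^2*(r 5)^2)) (2 * r 1 * (((2 : ℝ))*(r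 4)^2*(r 5)^2 + ((-2 : ℝ))*((r 4)^2)^2 + ((2 : ℝ))*(r 3)^2*(r 4)^2 + ((-2 : ℝ))*(r 2)^2*(r 5)^2 + ((2 : ℝ))*(r 2)^2*(r 4)^2 + ((2 : ℝ))*(r 2)^2*(r 3)^2 + ((-4 : ℝ))*(r 1)^2*(r 4)^2 + ((2 : ℝ))*(r 0)^2*(r 5)^2 + ((2 : ℝ))*(r 0)^2*(r 4)^2 + ((-2 : ℝ))*(r 0)^2*(r 3)^2)) (2 * r 2 * (((2 : ℝ))*(r 3)^2*(r 5)^2 + ((2 : ℝ))*(r 3)^2*(r 4)^2 + ((-2 : ℝ))*((r 3)^2)^2 + ((-4 : ℝ))*(r 2)^2*(r 3)^2 + ((-2 : ℝ))*(r 1)^2*(r 5)^2 + ((2 : ℝ))*(r 1)^2*(r 4)^2 + ((2 : ℝ))*(r 1)^2*(r 3)^2 + ((2 : ℝ))*(r 0)^2*(r 5)^2 + ((-2 : ℝ))*(r 0)^2*(r 4)^2 + ((2 : ℝ))*(r 0)^2*(r 3)^2)) (2 * r 3 * (((-2 : ℝ))*(r 4)^2*(r 5)^2 + ((2 : ℝ))*(r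 2)^2*(r 5)^2 + ((2 : ℝ))*(r 2)^2*(r 4)^2 + ((-4 : ℝ))*(r 2)^2*(r 3)^2 + ((-2 : ℝ))*((r 2)^2)^2 + ((2 : ℝ))*(r 1)^2*(r 4)^2 + ((2 : ℝ))*(r 1)^2*(r 2)^2 + ((2 : ℝ))*(r 0)^2*(r 5)^2 + ((2 : ℝ))*(r 0)^2*(r 2)^2 + ((-2 : ℝ))*(r 0)^2*(r 1)^2)) (2 * r 4 * (((-2 : ℝ))*(r 3)^2*(r 5)^2 + ((2 : ℝ))*(r 2)^2*(r 3)^2 + ((2 : ℝ))*(r 1)^2*(r 5)^2 + ((-4 : ℝ))*(r 1)^2*(r 4)^2 + ((2 : ℝ))*(r 1)^2*(r 3)^2 + ((2 : ℝ))*(r 1)^2*(r 2)^2 + ((-2 : ℝ))*((r 1)^2)^2 + ((2 : ℝ))*(r 0)^2*(r 5)^2 + ((-2 : ℝ))*(r 0)^2*(r 2)^2 + ((2 : ℝ))*(r 0)^2*(r 1)^2)) (2 * r 5 * (((-2 : ℝ))*(r 3)^2*(r 4)^2 + ((2 : ℝ))*(r 2)^2*(r 3)^2 + ((2 : ℝ))*(r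 1)^2*(r 4)^2 + ((-2 : ℝ))*(r 1)^2*(r 2)^2 + ((-4 : ℝ))*(r 0)^2*(r 5)^2 + ((2 : ℝ))*(r 0)^2*(r 4)^2 + ((2 : ℝ))*(r 0)^2*(r 3)^2 + ((2 : ℝ))*(r 0)^2*(r 2)^2 + ((2 : ℝ))*(r 0)^2*(r 1)^2 + ((-2 : ℝ))*((r 0)^2)^2))) r := by
  have e : Hvec = fun v : Fin 6 → ℝ => ((-2 : ℝ)) * (v 3 * v 3 * v 4 * v 4 * v 5 * v 5) + ((2 : ℝ)) * (v 2 * v 2 * v 3 * v 3 * v 5 * v 5) + ((2 : ℝ)) * (v 2 * v 2 * v 3 * v 3 * v 4 * v 4) + ((-2 : ℝ)) * (v 2 * v 2 * v 3 * v 3 * v 3 * v 3) + ((-2 : ℝ)) * (v 2 * v 2 * v 2 * v 2 * v 3 * v 3) + ((2 : ℝ)) * (v 1 * v 1 * v 4 * v 4 * v 5 * v 5) + ((-2 : ℝ)) * (v 1 * v 1 * v 4 * v 4 * v 4 * v 4) + ((2 : ℝ)) * (v 1 * v 1 * v 3 * v 3 * v 4 * v 4) + ((-2 : ℝ)) * (v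 1 * v 1 * v 2 * v 2 * v 5 * v 5) + ((2 : ℝ)) * (v 1 * v 1 * v 2 * v 2 * v 4 * v 4) + ((2 : ℝ)) * (v 1 * v 1 * v 2 * v 2 * v 3 * v 3) + ((-2 : ℝ)) * (v 1 * v 1 * v 1 * v 1 * v 4 * v 4) + ((-2 : ℝ)) * (v 0 * v 0 * v 5 * v 5 * v 5 * v 5) + ((2 : ℝ)) * (v 0 * v 0 * v 4 * v 4 * v 5 * v 5) + ((2 : ℝ)) * (v 0 * v 0 * v 3 * v 3 * v 5 * v 5) + ((2 : ℝ)) * (v 0 * v 0 * v 2 * v 2 * v 5 * v 5) + ((-2 : ℝ)) * (v 0 * v 0 * v 2 * v 2 * v 4 * v 4) + ((2 : ℝ)) * (v 0 * v 0 * v 2 * v 2 * v 3 * v 3) + ((2 : ℝ)) * (v 0 * v 0 * v 1 * v 1 * v 5 * v 5) + ((2 : ℝ)) * (v 0 * v 0 * v 1 * v 1 * v 4 * v 4) + ((-2 : ℝ)) * (v 0 * v 0 * v 1 * v 1 * v 3 * v 3) + ((-2 : ℝ)) * (v 0 * v 0 * v 0 * v 0 * v 5 * v 5) := by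
    funext v
    rw [Hvec, Matrix.det_succ_row_zero]
    simp only [Fin.sum_univ_succ, Fin.sum_univ_zero, Matrix.submatrix_apply, Matrix.det_succ_row_zero, Matrix.cons_val', Matrix.cons_val_zero, Matrix.cons_val_succ, Matrix.head_cons, Matrix.head_fin_const, Fin.succ_zero_eq_one, Matrix.empty_val', Matrix.cons_val_fin_one, Matrix.det_fin_zero, Fin.succAbove_zero, Matrix.submatrix_submatrix]
    norm_num [Fin.succAbove, Fin.lt_def, Function.comp]
    simp only [Matrix.vecHead, Matrix.vecTail, show ((Fin.castSucc 2 : Fin 5)) = (2:Fin 5) from rfl,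
      show ((Fin.castSucc 2 : Fin 4)) = (2:Fin 4) from rfl,
      show (((Fin.succ 2).castSucc : Fin 5)) = (3:Fin 5) from rfl,
      show (((Fin.castSucc 2).castSucc : Fin 5)) = (2:Fin 5) from rfl,
      Matrix.cons_val_zero, Matrix.cons_val_one, Matrix.head_cons,
      Matrix.cons_val_two, Matrix.cons_val_three, Matrix.cons_val_four,
      Matrix.cons_val_succ, Matrix.tail_cons, Function.comp]
    ring
  rw [e]
  refine HasFDerivAt.congr_fderiv (((((((((((((((((((((((((((((hp r 3).mul (hp r 3)).mul (hp r 4)).mul (hp r 4)).mul (hp r 5)).mul (hp r 5)).const_mul ((-2 : ℝ))).add (((((((hp r 2).mul (hp r 2)).mul (hp r 3)).mul (hp r 3)).mul (hp r 5)).mul (hp r 5)).const_mul ((2 : ℝ)))).add (((((((hp r 2).mul (hp r 2)).mul (hp r 3)).mul (hp r 3)).mul (hp r 4)).mul (hp r 4)).const_mul ((2 : ℝ)))).add (((((((hp r 2).mul (hp r 2)).mul (hp r 3)).mul (hp r 3)).mul (hp r 3)).mul (hp r 3)).const_mul ((-2 : ℝ)))).add (((((((hp r 2).mul (hp r 2)).mul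 (hp r 2)).mul (hp r 2)).mul (hp r 3)).mul (hp r 3)).const_mul ((-2 : ℝ)))).add (((((((hp r 1).mul (hp r 1)).mul (hp r 4)).mul (hp r 4)).mul (hp r 5)).mul (hp r 5)).const_mul ((2 : ℝ)))).add (((((((hp r 1).mul (hp r 1)).mul (hp r 4)).mul (hp r 4)).mul (hp r 4)).mul (hp r 4)).const_mul ((-2 : ℝ)))).add (((((((hp r 1).mul (hp r 1)).mul (hp r 3)).mul (hp r 3)).mul (hp r 4)).mul (hp r 4)).const_mul ((2 : ℝ)))).add (((((((hp r 1).mul (hp r 1)).mul (hp r 2)).mul (hp r 2)).mul (hp r 5)).mul (hp r 5)).const_mul ((-2 : ℝ)))).add (((((((hp r 1).mul (hp r 1)).mul (hp r 2)).mul (hp r 2)).mul (hp r 4)).mul (hp r 4)).const_mul ((2 : ℝ)))).add (((((((hp r 1).mul (hp r 1)).mul (hp r 2)).mul (hp r 2)).mul (hp r 3)).mul (hp r 3)).const_mul ((2 : ℝ)))).add (((((((hp r 1).mul (hp r 1)).mul (hp r 1)).mul (hp r 1)).mul (hp r 4)).mul (hp r 4)).const_mul ((-2 : ℝ)))).add (((((((hp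 r 0).mul (hp r 0)).mul (hp r 5)).mul (hp r 5)).mul (hp r 5)).mul (hp r 5)).const_mul ((-2 : ℝ)))).add (((((((hp r 0).mul (hp r 0)).mul (hp r 4)).mul (hp r 4)).mul (hp r 5)).mul (hp r 5)).const_mul ((2 : ℝ)))).add (((((((hp r 0).mul (hp r 0)).mul (hp r 3)).mul (hp r 3)).mul (hp r 5)).mul (hp r 5)).const_mul ((2 : ℝ)))).add (((((((hp r 0).mul (hp r 0)).mul (hp r 2)).mul (hp r 2)).mul (hp r 5)).mul (hp r 5)).const_mul ((2 : ℝ)))).add (((((((hp r 0).mul (hp r 0)).mul (hp r 2)).mul (hp r 2)).mul (hp r 4)).mul (hp r 4)).const_mul ((-2 : ℝ)))).add (((((((hp r 0).mul (hp r 0)).mul (hp r 2)).mul (hp r 2)).mul (hp r 3)).mul (hp r 3)).const_mul ((2 : ℝ)))).add (((((((hp r 0).mul (hp r 0)).mul (hp r 1)).mul (hp r 1)).mul (hp r 5)).mul (hp r 5)).const_mul ((2 : ℝ)))).add (((((((hp r 0).mul (hp r 0)).mul (hp r 1)).mul (hp r 1)).mul (hp r 4)).mul (hp r 4)).const_mul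 ((2 : ℝ)))).add (((((((hp r 0).mul (hp r 0)).mul (hp r 1)).mul (hp r 1)).mul (hp r 3)).mul (hp r 3)).const_mul ((-2 : ℝ)))).add (((((((hp r 0).mul (hp r 0)).mul (hp r 0)).mul (hp r 0)).mul (hp r 5)).mul (hp r 5)).const_mul ((-2 : ℝ))))) ?_
  refine ContinuousLinearMap.ext fun v => ?_
  simp only [ContinuousLinearMap.add_apply, ContinuousLinearMap.smul_apply, dzpr_apply,
    dzclm_apply, smul_eq_mul, Pi.mul_apply, Pi.pow_apply]
  ring


lemma dzcollinear (q : Fin 4 → EuclideanSpace ℝ (Fin 2)) (hne : q 1 ≠ q 0)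
    (h2 : (q 1 0 - q 0 0) * (q 2 1 - q 0 1) - (q 1 1 - q 0 1) * (q 2 0 - q 0 0) = 0)
    (h3 : (q 1 0 - q 0 0) * (q 3 1 - q 0 1) - (q 1 1 - q 0 1) * (q 3 0 - q 0 0) = 0) :
    Collinear ℝ (Set.range q) := by
  have hv : q 1 - q 0 ≠ 0 := sub_ne_zero.2 hne
  have hv' : (q 1 0 - q 0 0) ≠ 0 ∨ (q 1 1 - q 0 1) ≠ 0 := by
    by_contra hcon
    push_neg at hcon
    apply hv
    ext c
    fin_cases c
    · exact hcon.1
    · exact hcon.2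
  have coords : ∀ (z : EuclideanSpace ℝ (Fin 2)) (c : ℝ),
      z 0 = c * (q 1 0 - q 0 0) + q 0 0 → z 1 = c * (q 1 1 - q 0 1) + q 0 1 →
      z = c • (q 1 - q 0) +ᵥ q 0 := by
    intro z c h0 h1
    ext i
    fin_cases i
    · exact h0
    · exact h1
  refine (collinear_iff_of_mem (Set.mem_range_self 0)).2 ⟨q 1 - q 0, ?_⟩
  rintro p ⟨i, rfl⟩
  have key : ∀ j : Fin 4,
      (q 1 0 - q 0 0) * (q j 1 - q 0 1) - (q 1 1 - q 0 1) * (q j 0 - q 0 0) = 0 →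
      ∃ c : ℝ, q j = c • (q 1 - q 0) +ᵥ q 0 := by
    intro j hj
    rcases hv' with hx | hy
    · refine ⟨(q j 0 - q 0 0)/(q 1 0 - q 0 0), coords _ _ (by field_simp; ring) ?_⟩
      field_simp
      linear_combination hj
    · refine ⟨(q j 1 - q 0 1)/(q 1 1 - q 0 1), coords _ _ ?_ (by field_simp; ring)⟩
      field_simp
      linear_combination -hj
  refine key i ?_
  fin_cases i
  · show (q 1 0 - q 0 0) * (q 0 1 - q 0 1) - (q 1 1 - q 0 1) * (q 0 0 - q 0 0) = 0; ring
  · show (q 1 0 - q 0 0) * (q 1 1 - q 0 1) - (q 1 1 - q 0 1) * (q 1 0 - q 0 0) = 0; ring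
  · exact h2
  · exact h3

set_option maxHeartbeats 4000000 in
/-- Dziobek's characterization: a normalized planar non-collinear four-body
configuration with center of mass at the origin is a central configuration if
and only if its distance vector is a critical point of `U` restricted to
`𝒩 = {I = 1, H = 0}` (via Lagrange multipliers). -/
theorem dziobek_characterization (m : Fin 4 → ℝ) (hm : ∀ i, 0 < m i)
    (q : Fin 4 → EuclideanSpace ℝ (Fin 2))
    (hdist : ∀ i j, i ≠ j → q i ≠ q j)
    (hnoncol : ¬ Collinear ℝ (Set.range q))
    (hcm : ∑ i, m i • q i = 0)
    (hI : Ivec (m 0) (m 1) (m 2) (m 3) (rvec q) = 1) :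
    (∃ lam : ℝ, ∀ i, (lam * m i) • q i =
        ∑ j ∈ Finset.univ.erase i, ((m i * m j) / ‖q j - q i‖^3) • (q j - q i)) ↔
    (∃ lam' eta : ℝ,
        fderiv ℝ (Uvec (m 0) (m 1) (m 2) (m 3)) (rvec q) =
          (lam' * (m 0 + m 1 + m 2 + m 3)) •
              fderiv ℝ (Ivec (m 0) (m 1) (m 2) (m 3)) (rvec q)
            + eta • fderiv ℝ Hvec (rvec q)) := by
  have hrne : ∀ k, rvec q k ≠ 0 := by
    intro k; fin_cases k
    · exact dist_ne_zero.2 (hdist 0 1 (by decide))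
    · exact dist_ne_zero.2 (hdist 0 2 (by decide))
    · exact dist_ne_zero.2 (hdist 0 3 (by decide))
    · exact dist_ne_zero.2 (hdist 1 2 (by decide))
    · exact dist_ne_zero.2 (hdist 1 3 (by decide))
    · exact dist_ne_zero.2 (hdist 2 3 (by decide))
  have hu0 : rvec q 0 * (rvec q 0)⁻¹ = 1 := mul_inv_cancel₀ (hrne 0)
  have hu1 : rvec q 1 * (rvec q 1)⁻¹ = 1 := mul_inv_cancel₀ (hrne 1)
  have hu2 : rvec q 2 * (rvec q 2)⁻¹ = 1 := mul_inv_cancel₀ (hrne 2)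
  have hu3 : rvec q 3 * (rvec q 3)⁻¹ = 1 := mul_inv_cancel₀ (hrne 3)
  have hu4 : rvec q 4 * (rvec q 4)⁻¹ = 1 := mul_inv_cancel₀ (hrne 4)
  have hu5 : rvec q 5 * (rvec q 5)⁻¹ = 1 := mul_inv_cancel₀ (hrne 5)
  have hsq0 : rvec q 0 ^ 2 = (q 0 0 - q 1 0)^2 + (q 0 1 - q 1 1)^2 := by
    rw [show rvec q 0 = dist (q 0) (q 1) from rfl, EuclideanSpace.dist_eq]
    rw [Real.sq_sqrt (by positivity)]
    simp [Fin.sum_univ_two, Real.dist_eq, sq_abs]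
  have hsq1 : rvec q 1 ^ 2 = (q 0 0 - q 2 0)^2 + (q 0 1 - q 2 1)^2 := by
    rw [show rvec q 1 = dist (q 0) (q 2) from rfl, EuclideanSpace.dist_eq]
    rw [Real.sq_sqrt (by positivity)]
    simp [Fin.sum_univ_two, Real.dist_eq, sq_abs]
  have hsq2 : rvec q 2 ^ 2 = (q 0 0 - q 3 0)^2 + (q 0 1 - q 3 1)^2 := by
    rw [show rvec q 2 = dist (q 0) (q 3) from rfl, EuclideanSpace.dist_eq]
    rw [Real.sq_sqrt (by positivity)]
    simp [Fin.sum_univ_two, Real.dist_eq, sq_abs]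
  have hsq3 : rvec q 3 ^ 2 = (q 1 0 - q 2 0)^2 + (q 1 1 - q 2 1)^2 := by
    rw [show rvec q 3 = dist (q 1) (q 2) from rfl, EuclideanSpace.dist_eq]
    rw [Real.sq_sqrt (by positivity)]
    simp [Fin.sum_univ_two, Real.dist_eq, sq_abs]
  have hsq4 : rvec q 4 ^ 2 = (q 1 0 - q 3 0)^2 + (q 1 1 - q 3 1)^2 := by
    rw [show rvec q 4 = dist (q 1) (q 3) from rfl, EuclideanSpace.dist_eq]
    rw [Real.sq_sqrt (by positivity)]
    simp [Fin.sum_univ_two, Real.dist_eq, sq_abs]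
  have hsq5 : rvec q 5 ^ 2 = (q 2 0 - q 3 0)^2 + (q 2 1 - q 3 1)^2 := by
    rw [show rvec q 5 = dist (q 2) (q 3) from rfl, EuclideanSpace.dist_eq]
    rw [Real.sq_sqrt (by positivity)]
    simp [Fin.sum_univ_two, Real.dist_eq, sq_abs]
  have hcma : m 0*q 0 0 + m 1*q 1 0 + m 2*q 2 0 + m 3*q 3 0 = 0 := by
    simpa [Fin.sum_univ_four] using congrArg (fun z : EuclideanSpace ℝ (Fin 2) => z 0) hcm
  have hcmb : m 0*q 0 1 + m 1*q 1 1 + m 2*q 2 1 + m 3*q 3 1 = 0 := by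
    simpa [Fin.sum_univ_four] using congrArg (fun z : EuclideanSpace ℝ (Fin 2) => z 1) hcm
  have hnc : ((q 1 0*(q 2 1*1 - (q 3 1*1)) - (q 1 1*(q 2 0*1 - (q 3 0*1))) + 1*(q 2 0*q 3 1 - (q 3 0*q 2 1)))) ≠ 0 ∨ ((-(q 0 0*(q 2 1*1 - (q 3 1*1)) - (q 0 1*(q 2 0*1 - (q 3 0*1))) + 1*(q 2 0*q 3 1 - (q 3 0*q 2 1))))) ≠ 0 ∨ ((q 0 0*(q 1 1*1 - (q 3 1*1)) - (q 0 1*(q 1 0*1 - (q 3 0*1))) + 1*(q 1 0*q 3 1 - (q 3 0*q 1 1)))) ≠ 0 ∨ ((-(q 0 0*(q 1 1*1 - (q 2 1*1)) - (q 0 1*(q 1 0*1 - (q 2 0*1))) + 1*(q 1 0*q 2 1 - (q 2 0*q 1 1))))) ≠ 0 := by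
    by_contra hall
    push_neg at hall
    obtain ⟨ht0, ht1, ht2, ht3⟩ := hall
    refine hnoncol (dzcollinear q (hdist 1 0 (by decide)) ?_ ?_)
    · linear_combination -ht3
    · linear_combination ht2
  have hn10 : ‖q 1 - q 0‖ = rvec q 0 := by rw [← dist_eq_norm, dist_comm]; rfl
  have hn20 : ‖q 2 - q 0‖ = rvec q 1 := by rw [← dist_eq_norm, dist_comm]; rfl
  have hn30 : ‖q 3 - q 0‖ = rvec q 2 := by rw [← dist_eq_norm, dist_comm]; rfl
  have hn01 : ‖q 0 - q 1‖ = rvec q 0 := by rw [← dist_eq_norm]; rfl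
  have hn21 : ‖q 2 - q 1‖ = rvec q 3 := by rw [← dist_eq_norm, dist_comm]; rfl
  have hn31 : ‖q 3 - q 1‖ = rvec q 4 := by rw [← dist_eq_norm, dist_comm]; rfl
  have hn02 : ‖q 0 - q 2‖ = rvec q 1 := by rw [← dist_eq_norm]; rfl
  have hn12 : ‖q 1 - q 2‖ = rvec q 3 := by rw [← dist_eq_norm]; rfl
  have hn32 : ‖q 3 - q 2‖ = rvec q 5 := by rw [← dist_eq_norm, dist_comm]; rfl
  have hn03 : ‖q 0 - q 3‖ = rvec q 2 := by rw [← dist_eq_norm]; rfl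
  have hn13 : ‖q 1 - q 3‖ = rvec q 4 := by rw [← dist_eq_norm]; rfl
  have hn23 : ‖q 2 - q 3‖ = rvec q 5 := by rw [← dist_eq_norm]; rfl
  have KEY := master (m 0) (m 1) (m 2) (m 3) (q 0 0) (q 1 0) (q 2 0) (q 3 0) (q 0 1) (q 1 1) (q 2 1) (q 3 1) (rvec q 0) (rvec q 1) (rvec q 2) (rvec q 3) (rvec q 4) (rvec q 5) ((rvec q 0)⁻¹) ((rvec q 1)⁻¹) ((rvec q 2)⁻¹) ((rvec q 3)⁻¹) ((rvec q 4)⁻¹) ((rvec q 5)⁻¹) (hm 0) (hm 1) (hm 2) (hm 3) hu0 hu1 hu2 hu3 hu4 hu5 hcma hcmb hnc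
  rw [(dzHasFDerivAt_Uvec (m 0) (m 1) (m 2) (m 3) (rvec q) hrne).fderiv,
    (dzHasFDerivAt_Ivec (m 0) (m 1) (m 2) (m 3) (rvec q)).fderiv,
    (dzHasFDerivAt_Hvec (rvec q)).fderiv]
  have hH0 : 2 * rvec q 0 * (((-2 : ℝ))*((rvec q 5)^2)^2 + ((2 : ℝ))*(rvec q 4)^2*(rvec q 5)^2 + ((2 : ℝ))*(rvec q 3)^2*(rvec q 5)^2 + ((2 : ℝ))*(rvec q 2)^2*(rvec q 5)^2 + ((-2 : ℝ))*(rvec q 2)^2*(rvec q 4)^2 + ((2 : ℝ))*(rvec q 2)^2*(rvec q 3)^2 + ((2 : ℝ))*(rvec q 1)^2*(rvec q 5)^2 + ((2 : ℝ))*(rvec q 1)^2*(rvec q 4)^2 + ((-2 : ℝ))*(rvec q 1)^2*(rvec q 3)^2 + ((-4 : ℝ))*(rvec q 0)^2*(rvec q 5)^2) = -16 * rvec q 0 * (((q 1 0*(q 2 1*1 - (q 3 1*1)) - (q 1 1*(q 2 0*1 - (q 3 0*1))) + 1*(q 2 0*q 3 1 - (q 3 0*q 2 1))))*((-(q 0 0*(q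 2 1*1 - (q 3 1*1)) - (q 0 1*(q 2 0*1 - (q 3 0*1))) + 1*(q 2 0*q 3 1 - (q 3 0*q 2 1)))))) := by
    rw [hsq0, hsq1, hsq2, hsq3, hsq4, hsq5]; ring
  have hH1 : 2 * rvec q 1 * (((2 : ℝ))*(rvec q 4)^2*(rvec q 5)^2 + ((-2 : ℝ))*((rvec q 4)^2)^2 + ((2 : ℝ))*(rvec q 3)^2*(rvec q 4)^2 + ((-2 : ℝ))*(rvec q 2)^2*(rvec q 5)^2 + ((2 : ℝ))*(rvec q 2)^2*(rvec q 4)^2 + ((2 : ℝ))*(rvec q 2)^2*(rvec q 3)^2 + ((-4 : ℝ))*(rvec q 1)^2*(rvec q 4)^2 + ((2 : ℝ))*(rvec q 0)^2*(rvec q 5)^2 + ((2 : ℝ))*(rvec q 0)^2*(rvec q 4)^2 + ((-2 : ℝ))*(rvec q 0)^2*(rvec q 3)^2) = -16 * rvec q 1 * (((q 1 0*(q 2 1*1 - (q 3 1*1)) - (q 1 1*(q 2 0*1 - (q 3 0*1))) + 1*(q 2 0*q 3 1 - (q 3 0*q 2 1))))*((q 0 0*(q 1 1*1 - (q 3 1*1))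 - (q 0 1*(q 1 0*1 - (q 3 0*1))) + 1*(q 1 0*q 3 1 - (q 3 0*q 1 1))))) := by
    rw [hsq0, hsq1, hsq2, hsq3, hsq4, hsq5]; ring
  have hH2 : 2 * rvec q 2 * (((2 : ℝ))*(rvec q 3)^2*(rvec q 5)^2 + ((2 : ℝ))*(rvec q 3)^2*(rvec q 4)^2 + ((-2 : ℝ))*((rvec q 3)^2)^2 + ((-4 : ℝ))*(rvec q 2)^2*(rvec q 3)^2 + ((-2 : ℝ))*(rvec q 1)^2*(rvec q 5)^2 + ((2 : ℝ))*(rvec q 1)^2*(rvec q 4)^2 + ((2 : ℝ))*(rvec q 1)^2*(rvec q 3)^2 + ((2 : ℝ))*(rvec q 0)^2*(rvec q 5)^2 + ((-2 : ℝ))*(rvec q 0)^2*(rvec q 4)^2 + ((2 : ℝ))*(rvec q 0)^2*(rvec q 3)^2) = -16 * rvec q 2 * (((q 1 0*(q 2 1*1 - (q 3 1*1)) - (q 1 1*(q 2 0*1 - (q 3 0*1))) + 1*(q 2 0*q 3 1 - (q 3 0*q 2 1))))*((-(q 0 0*(q 1 1*1 - (q 2 1*1)) - (q 0 1*(q 1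 0*1 - (q 2 0*1))) + 1*(q 1 0*q 2 1 - (q 2 0*q 1 1)))))) := by
    rw [hsq0, hsq1, hsq2, hsq3, hsq4, hsq5]; ring
  have hH3 : 2 * rvec q 3 * (((-2 : ℝ))*(rvec q 4)^2*(rvec q 5)^2 + ((2 : ℝ))*(rvec q 2)^2*(rvec q 5)^2 + ((2 : ℝ))*(rvec q 2)^2*(rvec q 4)^2 + ((-4 : ℝ))*(rvec q 2)^2*(rvec q 3)^2 + ((-2 : ℝ))*((rvec q 2)^2)^2 + ((2 : ℝ))*(rvec q 1)^2*(rvec q 4)^2 + ((2 : ℝ))*(rvec q 1)^2*(rvec q 2)^2 + ((2 : ℝ))*(rvec q 0)^2*(rvec q 5)^2 + ((2 : ℝ))*(rvec q 0)^2*(rvec q 2)^2 + ((-2 : ℝ))*(rvec q 0)^2*(rvec q 1)^2) = -16 * rvec q 3 * (((-(q 0 0*(q 2 1*1 - (q 3 1*1)) - (q 0 1*(q 2 0*1 - (q 3 0*1))) + 1*(q 2 0*q 3 1 - (q 3 0*q 2 1)))))*((q 0 0*(q 1 1*1 - (q 3 1*1)) - (q 0 1*(q 1 0*1 - (q 3 0*1)))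 + 1*(q 1 0*q 3 1 - (q 3 0*q 1 1))))) := by
    rw [hsq0, hsq1, hsq2, hsq3, hsq4, hsq5]; ring
  have hH4 : 2 * rvec q 4 * (((-2 : ℝ))*(rvec q 3)^2*(rvec q 5)^2 + ((2 : ℝ))*(rvec q 2)^2*(rvec q 3)^2 + ((2 : ℝ))*(rvec q 1)^2*(rvec q 5)^2 + ((-4 : ℝ))*(rvec q 1)^2*(rvec q 4)^2 + ((2 : ℝ))*(rvec q 1)^2*(rvec q 3)^2 + ((2 : ℝ))*(rvec q 1)^2*(rvec q 2)^2 + ((-2 : ℝ))*((rvec q 1)^2)^2 + ((2 : ℝ))*(rvec q 0)^2*(rvec q 5)^2 + ((-2 : ℝ))*(rvec q 0)^2*(rvec q 2)^2 + ((2 : ℝ))*(rvec q 0)^2*(rvec q 1)^2) = -16 * rvec q 4 * (((-(q 0 0*(q 2 1*1 - (q 3 1*1)) - (q 0 1*(q 2 0*1 - (q 3 0*1))) + 1*(q 2 0*q 3 1 - (q 3 0*q 2 1)))))*((-(q 0 0*(q 1 1*1 - (q 2 1*1)) - (q 0 1*(q 1 0*1 - (q 2 0*1))) + 1*(q 1 0*q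 2 1 - (q 2 0*q 1 1)))))) := by
    rw [hsq0, hsq1, hsq2, hsq3, hsq4, hsq5]; ring
  have hH5 : 2 * rvec q 5 * (((-2 : ℝ))*(rvec q 3)^2*(rvec q 4)^2 + ((2 : ℝ))*(rvec q 2)^2*(rvec q 3)^2 + ((2 : ℝ))*(rvec q 1)^2*(rvec q 4)^2 + ((-2 : ℝ))*(rvec q 1)^2*(rvec q 2)^2 + ((-4 : ℝ))*(rvec q 0)^2*(rvec q 5)^2 + ((2 : ℝ))*(rvec q 0)^2*(rvec q 4)^2 + ((2 : ℝ))*(rvec q 0)^2*(rvec q 3)^2 + ((2 : ℝ))*(rvec q 0)^2*(rvec q 2)^2 + ((2 : ℝ))*(rvec q 0)^2*(rvec q 1)^2 + ((-2 : ℝ))*((rvec q 0)^2)^2) = -16 * rvec q 5 * (((q 0 0*(q 1 1*1 - (q 3 1*1)) - (q 0 1*(q 1 0*1 - (q 3 0*1))) + 1*(q 1 0*q 3 1 - (q 3 0*q 1 1))))*((-(q 0 0*(q 1 1*1 - (q 2 1*1)) - (q 0 1*(q 1 0*1 - (q 2 0*1))) + 1*(q 1 0*q 2 1 - (q 2 0*q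 1 1)))))) := by
    rw [hsq0, hsq1, hsq2, hsq3, hsq4, hsq5]; ring
  have hI0 : ∀ t : ℝ, (t*(m 0+m 1+m 2+m 3))*((1/(2*(m 0+m 1+m 2+m 3)))*(2*(m 0*m 1)*rvec q 0)) = t*((m 0*m 1)*rvec q 0) := by
    intro t
    have hm0 := hm 0; have hm1 := hm 1; have hm2 := hm 2; have hm3 := hm 3
    have hMne : m 0+m 1+m 2+m 3 ≠ 0 := by positivity
    field_simp
  have hI1 : ∀ t : ℝ, (t*(m 0+m 1+m 2+m 3))*((1/(2*(m 0+m 1+m 2+m 3)))*(2*(m 0*m 2)*rvec q 1)) = t*((m 0*m 2)*rvec q 1) := by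
    intro t
    have hm0 := hm 0; have hm1 := hm 1; have hm2 := hm 2; have hm3 := hm 3
    have hMne : m 0+m 1+m 2+m 3 ≠ 0 := by positivity
    field_simp
  have hI2 : ∀ t : ℝ, (t*(m 0+m 1+m 2+m 3))*((1/(2*(m 0+m 1+m 2+m 3)))*(2*(m 0*m 3)*rvec q 2)) = t*((m 0*m 3)*rvec q 2) := by
    intro t
    have hm0 := hm 0; have hm1 := hm 1; have hm2 := hm 2; have hm3 := hm 3
    have hMne : m 0+m 1+m 2+m 3 ≠ 0 := by positivity
    field_simp
  have hI3 : ∀ t : ℝ, (t*(m 0+m 1+m 2+m 3))*((1/(2*(m 0+m 1+m 2+m 3)))*(2*(m 1*m 2)*rvec q 3)) = t*((m 1*m 2)*rvec q 3) := by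
    intro t
    have hm0 := hm 0; have hm1 := hm 1; have hm2 := hm 2; have hm3 := hm 3
    have hMne : m 0+m 1+m 2+m 3 ≠ 0 := by positivity
    field_simp
  have hI4 : ∀ t : ℝ, (t*(m 0+m 1+m 2+m 3))*((1/(2*(m 0+m 1+m 2+m 3)))*(2*(m 1*m 3)*rvec q 4)) = t*((m 1*m 3)*rvec q 4) := by
    intro t
    have hm0 := hm 0; have hm1 := hm 1; have hm2 := hm 2; have hm3 := hm 3
    have hMne : m 0+m 1+m 2+m 3 ≠ 0 := by positivity
    field_simp
  have hI5 : ∀ t : ℝ, (t*(m 0+m 1+m 2+m 3))*((1/(2*(m 0+m 1+m 2+m 3)))*(2*(m 2*m 3)*rvec q 5)) = t*((m 2*m 3)*rvec q 5) := by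
    intro t
    have hm0 := hm 0; have hm1 := hm 1; have hm2 := hm 2; have hm3 := hm 3
    have hMne : m 0+m 1+m 2+m 3 ≠ 0 := by positivity
    field_simp
  constructor
  · rintro ⟨lam, hv⟩
    have h0 := hv 0
    rw [show Finset.univ.erase (0 : Fin 4) = {1, 2, 3} from by decide, Finset.sum_insert (by decide), Finset.sum_insert (by decide), Finset.sum_singleton, hn10, hn20, hn30] at h0
    have F0xc := congrArg (fun z : EuclideanSpace ℝ (Fin 2) => z 0) h0
    simp only [PiLp.add_apply, PiLp.smul_apply, PiLp.sub_apply, smul_eq_mul] at F0xc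
    have F0x : lam*m 0*q 0 0 = m 0*m 1*(rvec q 0)⁻¹^3*(q 1 0 - (q 0 0)) + m 0*m 2*(rvec q 1)⁻¹^3*(q 2 0 - (q 0 0)) + m 0*m 3*(rvec q 2)⁻¹^3*(q 3 0 - (q 0 0)) := by linear_combination F0xc
    have F0yc := congrArg (fun z : EuclideanSpace ℝ (Fin 2) => z 1) h0
    simp only [PiLp.add_apply, PiLp.smul_apply, PiLp.sub_apply, smul_eq_mul] at F0yc
    have F0y : lam*m 0*q 0 1 = m 0*m 1*(rvec q 0)⁻¹^3*(q 1 1 - (q 0 1)) + m 0*m 2*(rvec q 1)⁻¹^3*(q 2 1 - (q 0 1)) + m 0*m 3*(rvec q 2)⁻¹^3*(q 3 1 - (q 0 1)) := by linear_combination F0yc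
    have h1 := hv 1
    rw [show Finset.univ.erase (1 : Fin 4) = {0, 2, 3} from by decide, Finset.sum_insert (by decide), Finset.sum_insert (by decide), Finset.sum_singleton, hn01, hn21, hn31] at h1
    have F1xc := congrArg (fun z : EuclideanSpace ℝ (Fin 2) => z 0) h1
    simp only [PiLp.add_apply, PiLp.smul_apply, PiLp.sub_apply, smul_eq_mul] at F1xc
    have F1x : lam*m 1*q 1 0 = m 1*m 0*(rvec q 0)⁻¹^3*(q 0 0 - (q 1 0)) + m 1*m 2*(rvec q 3)⁻¹^3*(q 2 0 - (q 1 0)) + m 1*m 3*(rvec q 4)⁻¹^3*(q 3 0 - (q 1 0)) := by linear_combination F1xc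
    have F1yc := congrArg (fun z : EuclideanSpace ℝ (Fin 2) => z 1) h1
    simp only [PiLp.add_apply, PiLp.smul_apply, PiLp.sub_apply, smul_eq_mul] at F1yc
    have F1y : lam*m 1*q 1 1 = m 1*m 0*(rvec q 0)⁻¹^3*(q 0 1 - (q 1 1)) + m 1*m 2*(rvec q 3)⁻¹^3*(q 2 1 - (q 1 1)) + m 1*m 3*(rvec q 4)⁻¹^3*(q 3 1 - (q 1 1)) := by linear_combination F1yc
    have h2 := hv 2
    rw [show Finset.univ.erase (2 : Fin 4) = {0, 1, 3} from by decide, Finset.sum_insert (by decide), Finset.sum_insert (by decide), Finset.sum_singleton, hn02, hn12, hn32] at h2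
    have F2xc := congrArg (fun z : EuclideanSpace ℝ (Fin 2) => z 0) h2
    simp only [PiLp.add_apply, PiLp.smul_apply, PiLp.sub_apply, smul_eq_mul] at F2xc
    have F2x : lam*m 2*q 2 0 = m 2*m 0*(rvec q 1)⁻¹^3*(q 0 0 - (q 2 0)) + m 2*m 1*(rvec q 3)⁻¹^3*(q 1 0 - (q 2 0)) + m 2*m 3*(rvec q 5)⁻¹^3*(q 3 0 - (q 2 0)) := by linear_combination F2xc
    have F2yc := congrArg (fun z : EuclideanSpace ℝ (Fin 2) => z 1) h2
    simp only [PiLp.add_apply, PiLp.smul_apply, PiLp.sub_apply, smul_eq_mul] at F2yc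
    have F2y : lam*m 2*q 2 1 = m 2*m 0*(rvec q 1)⁻¹^3*(q 0 1 - (q 2 1)) + m 2*m 1*(rvec q 3)⁻¹^3*(q 1 1 - (q 2 1)) + m 2*m 3*(rvec q 5)⁻¹^3*(q 3 1 - (q 2 1)) := by linear_combination F2yc
    have h3 := hv 3
    rw [show Finset.univ.erase (3 : Fin 4) = {0, 1, 2} from by decide, Finset.sum_insert (by decide), Finset.sum_insert (by decide), Finset.sum_singleton, hn03, hn13, hn23] at h3
    have F3xc := congrArg (fun z : EuclideanSpace ℝ (Fin 2) => z 0) h3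
    simp only [PiLp.add_apply, PiLp.smul_apply, PiLp.sub_apply, smul_eq_mul] at F3xc
    have F3x : lam*m 3*q 3 0 = m 3*m 0*(rvec q 2)⁻¹^3*(q 0 0 - (q 3 0)) + m 3*m 1*(rvec q 4)⁻¹^3*(q 1 0 - (q 3 0)) + m 3*m 2*(rvec q 5)⁻¹^3*(q 2 0 - (q 3 0)) := by linear_combination F3xc
    have F3yc := congrArg (fun z : EuclideanSpace ℝ (Fin 2) => z 1) h3
    simp only [PiLp.add_apply, PiLp.smul_apply, PiLp.sub_apply, smul_eq_mul] at F3yc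
    have F3y : lam*m 3*q 3 1 = m 3*m 0*(rvec q 2)⁻¹^3*(q 0 1 - (q 3 1)) + m 3*m 1*(rvec q 4)⁻¹^3*(q 1 1 - (q 3 1)) + m 3*m 2*(rvec q 5)⁻¹^3*(q 2 1 - (q 3 1)) := by linear_combination F3yc
    obtain ⟨l, e, C0, C1, C2, C3, C4, C5⟩ := KEY.1 ⟨lam, F0x, F0y, F1x, F1y, F2x, F2y, F3x, F3y⟩
    refine ⟨l, e, ?_⟩
    rw [dzclm_combo_iff]
    refine ⟨?_, ?_, ?_, ?_, ?_, ?_⟩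
    · linear_combination C0 - e*hH0 - hI0 l
    · linear_combination C1 - e*hH1 - hI1 l
    · linear_combination C2 - e*hH2 - hI2 l
    · linear_combination C3 - e*hH3 - hI3 l
    · linear_combination C4 - e*hH4 - hI4 l
    · linear_combination C5 - e*hH5 - hI5 l
  · rintro ⟨lam', eta, hEq⟩
    rw [dzclm_combo_iff] at hEq
    obtain ⟨G0, G1, G2, G3, G4, G5⟩ := hEq
    have C0' : -(m 0*m 1*(rvec q 0)⁻¹^2) = lam'*(m 0*m 1*rvec q 0) + eta*((-16)*rvec q 0*((q 1 0*(q 2 1*1 - (q 3 1*1)) - (q 1 1*(q 2 0*1 - (q 3 0*1))) + 1*(q 2 0*q 3 1 - (q 3 0*q 2 1)))*(-(q 0 0*(q 2 1*1 - (q 3 1*1)) - (q 0 1*(q 2 0*1 - (q 3 0*1))) + 1*(q 2 0*q 3 1 - (q 3 0*q 2 1)))))) := by linear_combination G0 + eta*hH0 + hI0 lam'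
    have C1' : -(m 0*m 2*(rvec q 1)⁻¹^2) = lam'*(m 0*m 2*rvec q 1) + eta*((-16)*rvec q 1*((q 1 0*(q 2 1*1 - (q 3 1*1)) - (q 1 1*(q 2 0*1 - (q 3 0*1))) + 1*(q 2 0*q 3 1 - (q 3 0*q 2 1)))*(q 0 0*(q 1 1*1 - (q 3 1*1)) - (q 0 1*(q 1 0*1 - (q 3 0*1))) + 1*(q 1 0*q 3 1 - (q 3 0*q 1 1))))) := by linear_combination G1 + eta*hH1 + hI1 lam'
    have C2' : -(m 0*m 3*(rvec q 2)⁻¹^2) = lam'*(m 0*m 3*rvec q 2) + eta*((-16)*rvec q 2*((q 1 0*(q 2 1*1 - (q 3 1*1)) - (q 1 1*(q 2 0*1 - (q 3 0*1))) + 1*(q 2 0*q 3 1 - (q 3 0*q 2 1)))*(-(q 0 0*(q 1 1*1 - (q 2 1*1)) - (q 0 1*(q 1 0*1 - (q 2 0*1))) + 1*(q 1 0*q 2 1 - (q 2 0*q 1 1)))))) := by linear_combination G2 + eta*hH2 + hI2 lam'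
    have C3' : -(m 1*m 2*(rvec q 3)⁻¹^2) = lam'*(m 1*m 2*rvec q 3) + eta*((-16)*rvec q 3*((-(q 0 0*(q 2 1*1 - (q 3 1*1)) - (q 0 1*(q 2 0*1 - (q 3 0*1))) + 1*(q 2 0*q 3 1 - (q 3 0*q 2 1))))*(q 0 0*(q 1 1*1 - (q 3 1*1)) - (q 0 1*(q 1 0*1 - (q 3 0*1))) + 1*(q 1 0*q 3 1 - (q 3 0*q 1 1))))) := by linear_combination G3 + eta*hH3 + hI3 lam'
    have C4' : -(m 1*m 3*(rvec q 4)⁻¹^2) = lam'*(m 1*m 3*rvec q 4) + eta*((-16)*rvec q 4*((-(q 0 0*(q 2 1*1 - (q 3 1*1)) - (q 0 1*(q 2 0*1 - (q 3 0*1))) + 1*(q 2 0*q 3 1 - (q 3 0*q 2 1))))*(-(q 0 0*(q 1 1*1 - (q 2 1*1)) - (q 0 1*(q 1 0*1 - (q 2 0*1))) + 1*(q 1 0*q 2 1 - (q 2 0*q 1 1)))))) := by linear_combination G4 + eta*hH4 + hI4 lam'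
    have C5' : -(m 2*m 3*(rvec q 5)⁻¹^2) = lam'*(m 2*m 3*rvec q 5) + eta*((-16)*rvec q 5*((q 0 0*(q 1 1*1 - (q 3 1*1)) - (q 0 1*(q 1 0*1 - (q 3 0*1))) + 1*(q 1 0*q 3 1 - (q 3 0*q 1 1)))*(-(q 0 0*(q 1 1*1 - (q 2 1*1)) - (q 0 1*(q 1 0*1 - (q 2 0*1))) + 1*(q 1 0*q 2 1 - (q 2 0*q 1 1)))))) := by linear_combination G5 + eta*hH5 + hI5 lam'
    obtain ⟨lam, E0x, E0y, E1x, E1y, E2x, E2y, E3x, E3y⟩ := KEY.2 ⟨lam', eta, C0', C1', C2', C3', C4', C5'⟩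
    refine ⟨lam, fun i => ?_⟩
    fin_cases i
    · show (lam * m 0) • q 0 =
        ∑ j ∈ Finset.univ.erase (0 : Fin 4), ((m 0 * m j) / ‖q j - q 0‖^3) • (q j - q 0)
      rw [show Finset.univ.erase (0 : Fin 4) = {1, 2, 3} from by decide, Finset.sum_insert (by decide), Finset.sum_insert (by decide), Finset.sum_singleton, hn10, hn20, hn30]
      refine dzvec _ _ ?_ ?_
      · simp only [PiLp.add_apply, PiLp.smul_apply, PiLp.sub_apply, smul_eq_mul]
        linear_combination E0x
      · simp only [PiLp.add_apply, PiLp.smul_apply, PiLp.sub_apply, smul_eq_mul]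
        linear_combination E0y
    · show (lam * m 1) • q 1 =
        ∑ j ∈ Finset.univ.erase (1 : Fin 4), ((m 1 * m j) / ‖q j - q 1‖^3) • (q j - q 1)
      rw [show Finset.univ.erase (1 : Fin 4) = {0, 2, 3} from by decide, Finset.sum_insert (by decide), Finset.sum_insert (by decide), Finset.sum_singleton, hn01, hn21, hn31]
      refine dzvec _ _ ?_ ?_
      · simp only [PiLp.add_apply, PiLp.smul_apply, PiLp.sub_apply, smul_eq_mul]
        linear_combination E1x
      · simp only [PiLp.add_apply, PiLp.smul_apply, PiLp.sub_apply, smul_eq_mul]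
        linear_combination E1y
    · show (lam * m 2) • q 2 =
        ∑ j ∈ Finset.univ.erase (2 : Fin 4), ((m 2 * m j) / ‖q j - q 2‖^3) • (q j - q 2)
      rw [show Finset.univ.erase (2 : Fin 4) = {0, 1, 3} from by decide, Finset.sum_insert (by decide), Finset.sum_insert (by decide), Finset.sum_singleton, hn02, hn12, hn32]
      refine dzvec _ _ ?_ ?_
      · simp only [PiLp.add_apply, PiLp.smul_apply, PiLp.sub_apply, smul_eq_mul]
        linear_combination E2x
      · simp only [PiLp.add_apply, PiLp.smul_apply, PiLp.sub_apply, smul_eq_mul]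
        linear_combination E2y
    · show (lam * m 3) • q 3 =
        ∑ j ∈ Finset.univ.erase (3 : Fin 4), ((m 3 * m j) / ‖q j - q 3‖^3) • (q j - q 3)
      rw [show Finset.univ.erase (3 : Fin 4) = {0, 1, 2} from by decide, Finset.sum_insert (by decide), Finset.sum_insert (by decide), Finset.sum_singleton, hn03, hn13, hn23]
      refine dzvec _ _ ?_ ?_
      · simp only [PiLp.add_apply, PiLp.smul_apply, PiLp.sub_apply, smul_eq_mul]
        linear_combination E3x
      · simp only [PiLp.add_apply, PiLp.smul_apply, PiLp.sub_apply, smul_eq_mul]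
        linear_combination E3y
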